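/- arXiv:1109.4345 — 2 statements merged into one kernel-verified Lean document; each statement's English description precedes it below -/
import Mathlib

section
/- If (1−H/2)/(3−2H) < β < 1/2, then for each q > 0 there is a constant C > 0 (depending on a, T, H, q) such that P( sup_{0≤s≤T} s^{1−H/2} | ∫_{−ε_n}^{0} [f_s(x) − f_s(x−ε_n)] dB₂(x) | > C α_n ) = o(n^{−q}) as n → ∞, the integral being a Wiener integral. -/
/- Formalization of results from "A strong convergence to the Rosenblatt process"
by J. Garzón, S. Torres and C.A. Tudor.

Conventions used throughout:
* Brownian motions are encoded by the predicates `IsTwoSidedBM` / `IsBM` below.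
* Wiener integrals of `C¹` deterministic integrands and pathwise Riemann–Stieltjes
  integrals against the (piecewise linear) transport processes are both encoded via
  the integration-by-parts formula (`rsInt`), with which they coincide (a.s. in the
  Wiener case).
* Double Wiener–Itô integrals (the processes `X^{2,H}`, `X^{3,H}` and the Rosenblatt
  process itself) are characterized as `L²(P)`-limits of their natural
  `ε`-regularizations, in which the singular kernel `(s-x)^{H/2-1}` is replaced by
  `(s+ε-x)^{H/2-1}` and the diagonal trace term is subtracted. -/

open MeasureTheory ProbabilityTheory Real Filter Set Asymptotics
open scoped ENNReal NNReal

noncomputable section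

variable {Ω : Type*} [MeasurableSpace Ω]

/-- A two-sided standard Brownian motion indexed by `ℝ` on the probability space
`(Ω, P)`: it vanishes at `0`, has a.s. continuous paths, Gaussian increments
`B t - B s ~ N(0, t-s)` for `s ≤ t`, and independent increments. -/
def IsTwoSidedBM (P : Measure Ω) (B : ℝ → Ω → ℝ) : Prop :=
  (∀ t, Measurable (B t)) ∧
  (∀ᵐ ω ∂P, B 0 ω = 0) ∧
  (∀ᵐ ω ∂P, Continuous fun t => B t ω) ∧
  (∀ s t : ℝ, s ≤ t →
    P.map (fun ω => B t ω - B s ω) = gaussianReal 0 (Real.toNNReal (t - s))) ∧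
  (∀ (n : ℕ) (u : Fin (n + 1) → ℝ), Monotone u →
    iIndepFun (m := fun _ => Real.measurableSpace)
      (fun i : Fin n => fun ω => B (u i.succ) ω - B (u i.castSucc) ω) P)

/-- A standard Brownian motion on `[0, ∞)` on the probability space `(Ω, P)`. -/
def IsBM (P : Measure Ω) (B : ℝ → Ω → ℝ) : Prop :=
  (∀ t, Measurable (B t)) ∧
  (∀ᵐ ω ∂P, B 0 ω = 0) ∧
  (∀ᵐ ω ∂P, ContinuousOn (fun t => B t ω) (Ici 0)) ∧
  (∀ s t : ℝ, 0 ≤ s → s ≤ t →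
    P.map (fun ω => B t ω - B s ω) = gaussianReal 0 (Real.toNNReal (t - s))) ∧
  (∀ (n : ℕ) (u : Fin (n + 1) → ℝ), Monotone u → 0 ≤ u 0 →
    iIndepFun (m := fun _ => Real.measurableSpace)
      (fun i : Fin n => fun ω => B (u i.succ) ω - B (u i.castSucc) ω) P)

/-- `Z` is a uniform transport process of parameter `n`: starting from `0` it moves with
velocity `±n` (the initial sign `V` being uniform on `{-1, 1}`), and it reverses its
velocity at the partial sums of an i.i.d. sequence `ξ` of exponential waiting times of
parameter `n²`, with `V` and the `ξ k` all independent. -/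
def IsUniformTransport (P : Measure Ω) (n : ℕ) (Z : ℝ → Ω → ℝ) : Prop :=
  ∃ (V : Ω → ℝ) (ξ : ℕ → Ω → ℝ),
    Measurable V ∧ (∀ k, Measurable (ξ k)) ∧
    P.map V = (1 / 2 : ℝ≥0∞) • Measure.dirac (1 : ℝ) +
      (1 / 2 : ℝ≥0∞) • Measure.dirac (-1 : ℝ) ∧
    (∀ k, P.map (ξ k) = expMeasure ((n : ℝ) ^ 2)) ∧
    iIndepFun (m := fun _ => Real.measurableSpace)
      (fun i : Option ℕ => Option.elim i V ξ) P ∧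
    ∀ ω, ∀ t : ℝ, Z t ω =
      ∫ s in (0 : ℝ)..t, (n : ℝ) * V ω *
        (-1 : ℝ) ^ (Set.ncard {k : ℕ | ∑ j ∈ Finset.range (k + 1), ξ j ω ≤ s})

/-- The sequence `ε_n = n^{-β/(1-H/2)}`. -/
def epsSeq (H β : ℝ) (n : ℕ) : ℝ := (n : ℝ) ^ (-(β / (1 - H / 2)))

/-- The rate `α_n = n^{-(1/2-β)} (log n)^{5/2}`. -/
def alphaRate (β : ℝ) (n : ℕ) : ℝ :=
  (n : ℝ) ^ (-(1 / 2 - β)) * Real.log n ^ ((5 : ℝ) / 2)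

/-- The rate `n^{-(1/2-β-γ)} (log n)^{5/2}`. -/
def alphaRate2 (β γ : ℝ) (n : ℕ) : ℝ :=
  (n : ℝ) ^ (-(1 / 2 - β - γ)) * Real.log n ^ ((5 : ℝ) / 2)

/-- The kernel `f_s(x) = (s-x)^{H/2-1}`. -/
def kf (H s x : ℝ) : ℝ := (s - x) ^ (H / 2 - 1)

/-- Its derivative in `x`: `∂_x f_s(x) = (1-H/2)(s-x)^{H/2-2}`. -/
def kdf (H s x : ℝ) : ℝ := (1 - H / 2) * (s - x) ^ (H / 2 - 2)

/-- Pathwise Riemann–Stieltjes integral `∫_c^d g dZ` of a `C¹` integrand `g`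
(with derivative `dg`) against a path `Z`, encoded through the
integration-by-parts formula; for such integrands this coincides with the pathwise
Riemann–Stieltjes integral when `Z` is continuous of bounded variation, and a.s. with
the Wiener integral when `Z` is a Brownian path. -/
def rsInt (g dg Z : ℝ → ℝ) (c d : ℝ) : ℝ :=
  g d * Z d - g c * Z c - ∫ x in c..d, dg x * Z x

/-- Pathwise version (via integration by parts, using `B 0 = 0` a.s. and the decay
of `f` and of `B` at `-∞`) of the Wiener integral
`Y^{1,H}_s = ∫_{-∞}^0 (s-x)^{H/2-1} dB(x)`. -/
def Y1 (H : ℝ) (B : ℝ → Ω → ℝ) (s : ℝ) (ω : Ω) : ℝ :=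
  kf H s 0 * B 0 ω - ∫ x in Iic (0 : ℝ), kdf H s x * B x ω

/-- The time-inverted Brownian motion `B₃(u) = u B(1/u)` (with `B₃(0) = 0`,
automatic here since `1/0 = 0` and the prefactor vanishes). -/
def B3 (B : ℝ → Ω → ℝ) (u : ℝ) (ω : Ω) : ℝ := u * B (1 / u) ω

/-- The approximating process `Y^{1,H,n}` built from the transport processes `Z₂, Z₃`. -/
def Y1n (H β a : ℝ) (Z₂ Z₃ : ℝ → Ω → ℝ) (n : ℕ) (s : ℝ) (ω : Ω) : ℝ :=
  kf H s a * Z₂ a ω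
  - ∫ u in (1 / a)..(-(epsSeq H β n)), kdf H s (1 / u) * (u ^ 3)⁻¹ * Z₃ u ω
  + rsInt (kf H s) (kdf H s) (fun x => Z₂ x ω) a (-(epsSeq H β n))
  + rsInt (fun x => kf H s (x - epsSeq H β n)) (fun x => kdf H s (x - epsSeq H β n))
      (fun x => Z₂ x ω) (-(epsSeq H β n)) 0

/-- Pathwise version of `∫_0^s (s+ε-x)^{H/2-1} dW(x)` (integration by parts); used
both for `Y^{3,H}` (with `W` a Brownian motion, Wiener integral) and for `Y^{3,H,n}`
(with `W` a transport process, pathwise Riemann–Stieltjes integral). -/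
def Y3e (H ε : ℝ) (W : ℝ → Ω → ℝ) (s : ℝ) (ω : Ω) : ℝ :=
  rsInt (fun x => (s + ε - x) ^ (H / 2 - 1))
    (fun x => (1 - H / 2) * (s + ε - x) ^ (H / 2 - 2)) (fun x => W x ω) 0 s

/-- The strong approximation rate hypothesis (eq. (3.2) of the paper): for each
`q > 0`, `P( sup_{t ∈ [c,d]} |X t - Z^{(n)} t| > C n^{-1/2} (log n)^{5/2} ) = o(n^{-q})`
as `n → ∞`, for some constant `C > 0`. -/
def ApproxRate (P : Measure Ω) (X : ℝ → Ω → ℝ) (Z : ℕ → ℝ → Ω → ℝ) (c d : ℝ) : Prop :=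
  ∀ q : ℝ, 0 < q → ∃ C : ℝ, 0 < C ∧
    (fun n : ℕ =>
      (P {ω | C * (n : ℝ) ^ (-(1 : ℝ) / 2) * Real.log n ^ ((5 : ℝ) / 2) <
        ⨆ t ∈ Icc c d, |X t ω - Z n t ω|}).toReal)
    =o[atTop] fun n : ℕ => (n : ℝ) ^ (-q)

/-- `X^{1,H}_t = c(H) ∫_0^t (Y^{1,H}_s)² ds`. -/
def X1 (H cH : ℝ) (B : ℝ → Ω → ℝ) (t : ℝ) (ω : Ω) : ℝ :=
  cH * ∫ s in (0 : ℝ)..t, (Y1 H B s ω) ^ 2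

/-- `X^{1,H,n}_t = c(H) ∫_0^t (Y^{1,H,n}_s)² ds`. -/
def X1n (H β a cH : ℝ) (Z₂ Z₃ : ℝ → Ω → ℝ) (n : ℕ) (t : ℝ) (ω : Ω) : ℝ :=
  cH * ∫ s in (0 : ℝ)..t, (Y1n H β a Z₂ Z₃ n s ω) ^ 2

/-- `X^{3,H,n}_t = c(H) ∫_0^t (Y^{3,H,n}_s)² ds`. -/
def X3n (H β cH : ℝ) (Z₁ : ℝ → Ω → ℝ) (n : ℕ) (t : ℝ) (ω : Ω) : ℝ :=
  cH * ∫ s in (0 : ℝ)..t, (Y3e H (epsSeq H β n) Z₁ s ω) ^ 2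

/-- `X^{2,H,n}_t = c(H) ∫_0^t Y^{1,H,n}_s Y^{3,H,n}_s ds`. -/
def X2n (H β a cH : ℝ) (Z₁ Z₂ Z₃ : ℝ → Ω → ℝ) (n : ℕ) (t : ℝ) (ω : Ω) : ℝ :=
  cH * ∫ s in (0 : ℝ)..t, Y1n H β a Z₂ Z₃ n s ω * Y3e H (epsSeq H β n) Z₁ s ω

/-- Pathwise version of the regularized Wiener integral
`Y^ε_s = ∫_{-∞}^s (s+ε-x)^{H/2-1} dB(x)` (integration by parts). -/
def Yfull (H ε : ℝ) (B : ℝ → Ω → ℝ) (s : ℝ) (ω : Ω) : ℝ :=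
  ε ^ (H / 2 - 1) * B s ω - ∫ x in Iic s, (1 - H / 2) * (s + ε - x) ^ (H / 2 - 2) * B x ω

/-- `X` is (a version of) the double Wiener–Itô integral
`X^{3,H}_t = c(H) ∫_0^t∫_0^t (∫_{x₁∨x₂}^t (s-x₁)^{H/2-1}(s-x₂)^{H/2-1} ds) dB(x₁)dB(x₂)`,
characterized as the `L²(P)`-limit, as `ε → 0⁺`, of its regularizations
`c(H) ∫_0^t [ (Y^{3,ε}_s)² - ∫_0^s (s+ε-x)^{H-2} dx ] ds`, where
`Y^{3,ε}_s = ∫_0^s (s+ε-x)^{H/2-1} dB(x)` and the subtracted term is the diagonal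
trace `E[(Y^{3,ε}_s)²]`. -/
def IsX3 (P : Measure Ω) (H cH : ℝ) (B X : ℝ → Ω → ℝ) : Prop :=
  ∀ t : ℝ, 0 ≤ t → Tendsto (fun ε : ℝ =>
      ∫ ω, (cH * (∫ s in (0 : ℝ)..t,
        ((Y3e H ε B s ω) ^ 2 - ∫ x in (0 : ℝ)..s, (s + ε - x) ^ (H - 2))) - X t ω) ^ 2 ∂P)
    (nhdsWithin 0 (Ioi 0)) (nhds 0)

/-- `X` is (a version of) the double Wiener–Itô integral
`X^{2,H}_t = c(H) ∫_{-∞}^0 ∫_0^t (∫_{x₂}^t (s-x₁)^{H/2-1}(s-x₂)^{H/2-1} ds) dB(x₂)dB(x₁)`,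
characterized as the `L²(P)`-limit, as `ε → 0⁺`, of
`c(H) ∫_0^t Y^{1,H}_s Y^{3,ε}_s ds` (no trace term appears here, the two Wiener
integrals involving increments of `B` on disjoint intervals). -/
def IsX2 (P : Measure Ω) (H cH : ℝ) (B X : ℝ → Ω → ℝ) : Prop :=
  ∀ t : ℝ, 0 ≤ t → Tendsto (fun ε : ℝ =>
      ∫ ω, (cH * (∫ s in (0 : ℝ)..t, Y1 H B s ω * Y3e H ε B s ω) - X t ω) ^ 2 ∂P)
    (nhdsWithin 0 (Ioi 0)) (nhds 0)

/-- `X` is (a version of) the Rosenblatt process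
`X^H_t = c(H) ∫_ℝ∫_ℝ (∫_0^t (s-x₁)₊^{H/2-1}(s-x₂)₊^{H/2-1} ds) dB(x₁)dB(x₂)`,
characterized as the `L²(P)`-limit, as `ε → 0⁺`, of its regularizations
`c(H) ∫_0^t [ (Y^ε_s)² - ε^{H-1}/(1-H) ] ds`, where
`Y^ε_s = ∫_{-∞}^s (s+ε-x)^{H/2-1} dB(x)` and `ε^{H-1}/(1-H) = E[(Y^ε_s)²]` is the
diagonal trace term. -/
def IsRosenblatt (P : Measure Ω) (H cH : ℝ) (B X : ℝ → Ω → ℝ) : Prop :=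
  ∀ t : ℝ, 0 ≤ t → Tendsto (fun ε : ℝ =>
      ∫ ω, (cH * (∫ s in (0 : ℝ)..t,
        ((Yfull H ε B s ω) ^ 2 - ε ^ (H - 1) / (1 - H))) - X t ω) ^ 2 ∂P)
    (nhdsWithin 0 (Ioi 0)) (nhds 0)



lemma gauss_pdf_bound {v : ℝ≥0} {l : ℝ} (hl : 0 < l) {x : ℝ} (hx : l ≤ x) :
    gaussianPDFReal 0 v x ≤ rexp (-(l^2) / (2*v)) * gaussianPDFReal l v x := by
  unfold gaussianPDFReal
  rw [mul_comm (rexp (-(l^2) / (2*v)))]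
  conv_rhs => rw [mul_assoc, ← Real.exp_add]
  refine mul_le_mul_of_nonneg_left (Real.exp_le_exp.2 ?_) (by positivity)
  rcases eq_or_ne v 0 with hv | hv
  · simp [hv]
  · have hv' : (0:ℝ) < v := by positivity
    rw [← add_div, div_le_div_iff_of_pos_right (by positivity)]
    nlinarith
lemma gauss_tail_Ici {v : ℝ≥0} (hv : v ≠ 0) {l : ℝ} (hl : 0 < l) :
    gaussianReal 0 v (Ici l) ≤ ENNReal.ofReal (rexp (-(l^2) / (2*v))) := by
  rw [gaussianReal_apply_eq_integral _ hv]
  refine ENNReal.ofReal_le_ofReal ?_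
  calc ∫ x in Ici l, gaussianPDFReal 0 v x
      ≤ ∫ x in Ici l, rexp (-(l^2) / (2*v)) * gaussianPDFReal l v x := by
        refine setIntegral_mono_on ((integrable_gaussianPDFReal _ _).restrict)
          (((integrable_gaussianPDFReal l v).const_mul _).restrict) measurableSet_Ici ?_
        exact fun x hx => gauss_pdf_bound hl hx
    _ = rexp (-(l^2) / (2*v)) * ∫ x in Ici l, gaussianPDFReal l v x := by
        rw [integral_const_mul]
    _ ≤ rexp (-(l^2) / (2*v)) * 1 := by
        refine mul_le_mul_of_nonneg_left ?_ (by positivity)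
        rw [← integral_gaussianPDFReal_eq_one l hv]
        exact setIntegral_le_integral (integrable_gaussianPDFReal _ _)
          (ae_of_all _ (gaussianPDFReal_nonneg _ _))
    _ = _ := mul_one _

lemma gauss_tail_abs {v : ℝ≥0} {ε l : ℝ} (hvε : (v:ℝ) ≤ ε) (hε : 0 < ε) (hl : 0 < l) :
    gaussianReal 0 v {x : ℝ | l ≤ |x|} ≤ ENNReal.ofReal (2 * rexp (-(l^2) / (2*ε))) := by
  rcases eq_or_ne v 0 with hv | hv
  · rw [hv, gaussianReal_zero_var, Measure.dirac_apply' _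
      (measurableSet_le measurable_const measurable_abs)]
    have : (0:ℝ) ∉ {x : ℝ | l ≤ |x|} := by simp [hl.not_ge, abs_nonneg]
    rw [Set.indicator_of_notMem this]
    exact zero_le
  · have hv' : (0:ℝ) < v := by positivity
    have hmono : rexp (-(l^2) / (2*(v:ℝ))) ≤ rexp (-(l^2) / (2*ε)) := by
      rw [Real.exp_le_exp, neg_div, neg_div, neg_le_neg_iff]
      gcongr
    have hsub : {x : ℝ | l ≤ |x|} ⊆ Ici l ∪ (fun x : ℝ => (-1:ℝ) * x) ⁻¹' (Ici l) := by
      intro x hx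
      rcases abs_cases x with ⟨h1, _⟩ | ⟨h1, _⟩
      · left; rw [mem_Ici]; simp only [mem_setOf_eq, h1] at hx; exact hx
      · right; simp only [mem_preimage, mem_Ici, neg_one_mul]
        simp only [mem_setOf_eq, h1] at hx; linarith
    calc gaussianReal 0 v {x : ℝ | l ≤ |x|}
        ≤ gaussianReal 0 v (Ici l) + gaussianReal 0 v ((fun x : ℝ => (-1:ℝ) * x) ⁻¹' (Ici l)) :=
          le_trans (measure_mono hsub) (measure_union_le _ _)
      _ ≤ ENNReal.ofReal (rexp (-(l^2) / (2*ε))) + ENNReal.ofReal (rexp (-(l^2) / (2*ε))) := by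
          have h2 : gaussianReal 0 v ((fun x : ℝ => (-1:ℝ) * x) ⁻¹' (Ici l))
              = gaussianReal 0 v (Ici l) := by
            rw [← Measure.map_apply (measurable_id'.const_mul (-1)) measurableSet_Ici]
            have := gaussianReal_map_const_mul (μ := 0) (v := v) (-1 : ℝ)
            rw [show (fun x : ℝ => (-1:ℝ) * x) = ((-1:ℝ) * ·) from rfl, this]
            congr 1 <;> try norm_num
          rw [h2]
          have := (gauss_tail_Ici hv hl).trans (ENNReal.ofReal_le_ofReal hmono)
          exact add_le_add this this
      _ = ENNReal.ofReal (2 * rexp (-(l^2) / (2*ε))) := by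
          rw [← ENNReal.ofReal_add (by positivity) (by positivity)]
          congr 1
          ring

lemma bm_increment_tail {Ω : Type*} [MeasurableSpace Ω] (P : Measure Ω) (B : ℝ → Ω → ℝ)
    (hmeas : ∀ t, Measurable (B t))
    (hlaw : ∀ s t : ℝ, s ≤ t →
      P.map (fun ω => B t ω - B s ω) = gaussianReal 0 (Real.toNNReal (t - s)))
    {s t ε l : ℝ} (hst : s ≤ t) (hts : t - s ≤ ε) (hε : 0 < ε) (hl : 0 < l) :
    P {ω | l ≤ |B t ω - B s ω|} ≤ ENNReal.ofReal (2 * rexp (-(l^2) / (2*ε))) := by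
  have hm : Measurable (fun ω => B t ω - B s ω) := (hmeas t).sub (hmeas s)
  have hset : MeasurableSet {x : ℝ | l ≤ |x|} :=
    measurableSet_le measurable_const measurable_abs
  have : P {ω | l ≤ |B t ω - B s ω|}
      = (P.map (fun ω => B t ω - B s ω)) {x : ℝ | l ≤ |x|} := by
    rw [Measure.map_apply hm hset]; rfl
  rw [this, hlaw s t hst]
  refine gauss_tail_abs ?_ hε hl
  rw [Real.coe_toNNReal _ (sub_nonneg.2 hst)]
  exact hts

lemma etemadi_max {Ω : Type*} [MeasurableSpace Ω] (P : Measure Ω) [IsProbabilityMeasure P]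
    (B : ℝ → Ω → ℝ) (hmeas : ∀ t, Measurable (B t))
    (hlaw : ∀ s t : ℝ, s ≤ t →
      P.map (fun ω => B t ω - B s ω) = gaussianReal 0 (Real.toNNReal (t - s)))
    (hindep : ∀ (n : ℕ) (u : Fin (n + 1) → ℝ), Monotone u →
      iIndepFun (m := fun _ => Real.measurableSpace)
        (fun i : Fin n => fun ω => B (u i.succ) ω - B (u i.castSucc) ω) P)
    (N : ℕ) (u : Fin (N+1) → ℝ) (hu : Monotone u)
    {ε l : ℝ} (hε : 0 < ε) (hl : 0 < l)
    (hspan : u (Fin.last N) - u 0 ≤ ε)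
    (hhalf : ENNReal.ofReal (2 * rexp (-(l^2) / (2*ε))) ≤ 1/2) :
    P {ω | ∃ j, 2*l ≤ |B (u (Fin.last N)) ω - B (u j) ω|}
      ≤ ENNReal.ofReal (4 * rexp (-(l^2) / (2*ε))) := by
  set t₀ : ℝ≥0∞ := ENNReal.ofReal (2 * rexp (-(l^2) / (2*ε))) with ht₀
  set X : Fin N → Ω → ℝ := fun i ω => B (u i.succ) ω - B (u i.castSucc) ω with hXdef
  have hX : iIndepFun (m := fun _ => Real.measurableSpace) X P := hindep N u hu
  have hXm : ∀ i, Measurable (X i) := fun i => (hmeas _).sub (hmeas _)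
  set w : ℕ → ℝ := fun m => u ⟨min m N, by omega⟩ with hwdef
  have hwmono : Monotone w := by
    intro a b hab
    exact hu (by simp only [Fin.mk_le_mk]; omega)
  have hwN : w N = u (Fin.last N) := by
    show u ⟨min N N, _⟩ = u (Fin.last N)
    congr 1; apply Fin.ext; simp [Fin.last]
  have hw0 : w 0 = u 0 := by
    show u ⟨min 0 N, _⟩ = u 0
    congr 1
  have hXw : ∀ (i : Fin N) ω, X i ω = B (w (i.val+1)) ω - B (w i.val) ω := by
    intro i ω
    have h1 : w (i.val+1) = u i.succ := by
      show u ⟨min (i.val+1) N, _⟩ = u i.succ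
      congr 1; apply Fin.ext; simp [Nat.min_eq_left (Nat.succ_le_of_lt i.isLt)]
    have h2 : w i.val = u i.castSucc := by
      show u ⟨min i.val N, _⟩ = u i.castSucc
      congr 1; apply Fin.ext; simp [Nat.min_eq_left (le_of_lt i.isLt)]
    rw [h1, h2]
  set S : ℕ → Ω → ℝ := fun k ω => ∑ i : Fin N, if N - k ≤ i.val then X i ω else 0 with hSdef
  set D : ℕ → Ω → ℝ := fun k ω => ∑ i : Fin N, if i.val < N - k then X i ω else 0 with hDdef
  have hSm : ∀ k, Measurable (S k) := by
    intro k
    refine Finset.measurable_sum _ (fun i _ => ?_)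
    by_cases h : N - k ≤ i.val <;> simp [h, hXm i]
  have hDm : ∀ k, Measurable (D k) := by
    intro k
    refine Finset.measurable_sum _ (fun i _ => ?_)
    by_cases h : i.val < N - k <;> simp [h, hXm i]
  -- telescoping
  have htel : ∀ k, k ≤ N → ∀ ω, S k ω = B (w N) ω - B (w (N - k)) ω := by
    intro k hk ω
    have : S k ω = ∑ i ∈ Finset.range N,
        (if N - k ≤ i then B (w (i+1)) ω - B (w i) ω else 0) := by
      have e1 : S k ω = ∑ i : Fin N,
          (fun m : ℕ => if N - k ≤ m then B (w (m+1)) ω - B (w m) ω else 0) i.val :=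
        Finset.sum_congr rfl (fun i _ => by
          by_cases h : N - k ≤ i.val
          · simp only [h, if_true, hXw i ω]
          · simp only [h, if_false])
      rw [e1]
      exact Fin.sum_univ_eq_sum_range
        (fun m : ℕ => if N - k ≤ m then B (w (m+1)) ω - B (w m) ω else 0) N
    rw [this, Finset.sum_ite, Finset.sum_const_zero, add_zero]
    have hfil : (Finset.range N).filter (fun i => N - k ≤ i) = Finset.Ico (N-k) N := by
      ext i; simp [Finset.mem_filter, Finset.mem_Ico, Finset.mem_range]; omega
    rw [hfil, Finset.sum_Ico_eq_sub _ (Nat.sub_le N k),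
      Finset.sum_range_sub (fun m => B (w m) ω), Finset.sum_range_sub (fun m => B (w m) ω)]
    ring
  have htelD : ∀ k, ∀ ω, D k ω = B (w (N - k)) ω - B (w 0) ω := by
    intro k ω
    have : D k ω = ∑ i ∈ Finset.range N,
        (if i < N - k then B (w (i+1)) ω - B (w i) ω else 0) := by
      have e1 : D k ω = ∑ i : Fin N,
          (fun m : ℕ => if m < N - k then B (w (m+1)) ω - B (w m) ω else 0) i.val :=
        Finset.sum_congr rfl (fun i _ => by
          by_cases h : i.val < N - k
          · simp only [h, if_true, hXw i ω]
          · simp only [h, if_false])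
      rw [e1]
      exact Fin.sum_univ_eq_sum_range
        (fun m : ℕ => if m < N - k then B (w (m+1)) ω - B (w m) ω else 0) N
    rw [this, Finset.sum_ite, Finset.sum_const_zero, add_zero]
    have hfil : (Finset.range N).filter (fun i => i < N - k) = Finset.range (N-k) := by
      ext i; simp [Finset.mem_filter, Finset.mem_range]; omega
    rw [hfil, Finset.sum_range_sub (fun m => B (w m) ω)]
  have hsplit : ∀ k ω, S k ω + D k ω = S N ω := by
    intro k ω
    rw [hSdef, hDdef]
    simp only
    rw [← Finset.sum_add_distrib]
    refine Finset.sum_congr rfl (fun i _ => ?_)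
    have hiN : i.val < N := i.isLt
    by_cases h : N - k ≤ i.val
    · rw [if_pos h, if_neg (by omega), if_pos (by omega), add_zero]
    · rw [if_neg h, if_pos (by omega), if_pos (by omega), zero_add]
  -- events
  set E : ℕ → Set Ω := fun k => {ω | 2*l ≤ |S k ω|} with hEdef
  have hEm : ∀ k, MeasurableSet (E k) :=
    fun k => measurableSet_le measurable_const ((hSm k).abs)
  have hE0 : E 0 = ∅ := by
    rw [hEdef]
    ext ω
    have : S 0 ω = 0 := Finset.sum_eq_zero (fun i _ => by
      rw [if_neg]; omega)
    simp [this]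
    nlinarith
  have hEtop : ∀ k, N ≤ k → E k = E N := by
    intro k hk
    have hS : S k = S N := by
      funext ω
      refine Finset.sum_congr rfl (fun i _ => ?_)
      have h1 : N - k = 0 := by omega
      have h2 : N - N = 0 := by omega
      rw [h1, h2]
    show {ω | 2*l ≤ |S k ω|} = {ω | 2*l ≤ |S N ω|}
    rw [hS]
  set A : ℕ → Set Ω := fun k => E k \ ⋃ j ∈ Finset.range k, E j with hAdef
  have hAm : ∀ k, MeasurableSet (A k) := fun k =>
    (hEm k).diff (Finset.measurableSet_biUnion _ (fun j _ => hEm j))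
  have hAsub : ∀ k, A k ⊆ E k := fun k => Set.diff_subset
  have hAdis : Pairwise (Function.onFun Disjoint A) := by
    intro j k hjk
    rcases lt_or_gt_of_ne hjk with h | h
    · refine Set.disjoint_left.2 (fun ω hωj hωk => ?_)
      exact hωk.2 (Set.mem_biUnion (Finset.mem_range.2 h) hωj.1)
    · refine Set.disjoint_left.2 (fun ω hωj hωk => ?_)
      exact hωj.2 (Set.mem_biUnion (Finset.mem_range.2 h) hωk.1)
  have hAunion : ⋃ k, A k = ⋃ k, E k := by
    apply Set.Subset.antisymm
    · exact Set.iUnion_mono (fun k => Set.diff_subset)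
    · intro ω hω
      obtain ⟨k, hk⟩ := Set.mem_iUnion.1 hω
      have hex : ∃ m, ω ∈ E m := ⟨k, hk⟩
      refine Set.mem_iUnion.2 ⟨Nat.find hex, Nat.find_spec hex, ?_⟩
      intro hmem
      obtain ⟨j, hj1, hj2⟩ := Set.mem_iUnion₂.1 hmem
      exact Nat.find_min hex (Finset.mem_range.1 hj1) hj2
  have hAtop : ∀ k, N < k → A k = ∅ := by
    intro k hk
    apply Set.eq_empty_iff_forall_notMem.2
    rintro ω ⟨h1, h2⟩
    refine h2 (Set.mem_biUnion (Finset.mem_range.2 hk) ?_)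
    rwa [hEtop k (le_of_lt hk)] at h1
  set V : Set Ω := {ω | l ≤ |S N ω|} with hVdef
  have hVm : MeasurableSet V := measurableSet_le measurable_const ((hSm N).abs)
  set U : ℕ → Set Ω := fun k => {ω | l ≤ |D k ω|} with hUdef
  have hUm : ∀ k, MeasurableSet (U k) :=
    fun k => measurableSet_le measurable_const ((hDm k).abs)
  have hspan' : ∀ m, m ≤ N → w m - w 0 ≤ ε := by
    intro m hm
    have h1 : w m ≤ w N := hwmono hm
    have h2 : w N - w 0 ≤ ε := by rw [hwN, hw0]; exact hspan
    linarith
  have hPV : P V ≤ t₀ := by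
    have hVeq : V = {ω | l ≤ |B (w N) ω - B (w 0) ω|} := by
      rw [hVdef]
      ext ω
      rw [Set.mem_setOf_eq, Set.mem_setOf_eq, htel N le_rfl ω, Nat.sub_self]
    rw [hVeq, ht₀]
    exact bm_increment_tail P B hmeas hlaw (hwmono (Nat.zero_le N)) (hspan' N le_rfl) hε hl
  have hPU : ∀ k, P (U k) ≤ t₀ := by
    intro k
    have hUeq : U k = {ω | l ≤ |B (w (N-k)) ω - B (w 0) ω|} := by
      rw [hUdef]
      ext ω
      rw [Set.mem_setOf_eq, Set.mem_setOf_eq, htelD k ω]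
    rw [hUeq, ht₀]
    exact bm_increment_tail P B hmeas hlaw (hwmono (Nat.zero_le _))
      (hspan' _ (Nat.sub_le _ _)) hε hl
  -- independence
  have hindep_k : ∀ k, 1 ≤ k → k ≤ N → P (A k ∩ U k) = P (A k) * P (U k) := by
    intro k hk1 hkN
    classical
    set Sf : Finset (Fin N) := Finset.univ.filter (fun i => N - k ≤ i.val) with hSf
    set Pf : Finset (Fin N) := Finset.univ.filter (fun i => i.val < N - k) with hPf
    have hdisj : Disjoint Sf Pf := by
      rw [Finset.disjoint_left]
      intro i hi hj
      rw [hSf, Finset.mem_filter] at hi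
      rw [hPf, Finset.mem_filter] at hj
      omega
    have hIF := hX.indepFun_finset Sf Pf hdisj hXm
    set TS : Ω → ({x // x ∈ Sf} → ℝ) := fun ω i => X i ω with hTS
    set TP : Ω → ({x // x ∈ Pf} → ℝ) := fun ω i => X i ω with hTP
    set φ : ℕ → ({x // x ∈ Sf} → ℝ) → ℝ :=
      fun j v => ∑ i : {x // x ∈ Sf}, if N - j ≤ (i : Fin N).val then v i else 0 with hφ
    have hφm : ∀ j, Measurable (φ j) := by
      intro j
      refine Finset.measurable_sum _ (fun i _ => ?_)
      by_cases h : N - j ≤ (i : Fin N).val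
      · simpa [h] using measurable_pi_apply i
      · simp [h]
    have hφS : ∀ j, j ≤ k → ∀ ω, φ j (TS ω) = S j ω := by
      intro j hj ω
      have e1 : φ j (TS ω)
          = ∑ i ∈ Sf, (fun a : Fin N => if N - j ≤ a.val then X a ω else 0) i :=
        Finset.sum_coe_sort Sf (fun a : Fin N => if N - j ≤ a.val then X a ω else 0)
      rw [e1]
      refine Finset.sum_subset (Finset.subset_univ Sf) (fun i _ hni => ?_)
      simp only [hSf, Finset.mem_filter, Finset.mem_univ, true_and, not_le] at hni
      show (if N - j ≤ i.val then X i ω else 0) = 0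
      rw [if_neg]
      omega
    set ψ : ({x // x ∈ Pf} → ℝ) → ℝ := fun v => ∑ i, v i with hψ
    have hψm : Measurable ψ :=
      Finset.measurable_sum _ (fun i _ => measurable_pi_apply i)
    have hψD : ∀ ω, ψ (TP ω) = D k ω := by
      intro ω
      have e1 : ψ (TP ω) = ∑ i ∈ Pf, (fun a : Fin N => X a ω) i :=
        Finset.sum_coe_sort Pf (fun a : Fin N => X a ω)
      exact e1.trans (Finset.sum_filter (fun i : Fin N => i.val < N - k) (fun i => X i ω))
    set MA : Set ({x // x ∈ Sf} → ℝ) :=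
      {v | 2*l ≤ |φ k v|} \ ⋃ j ∈ Finset.range k, {v | 2*l ≤ |φ j v|} with hMA
    have hMAm : MeasurableSet MA :=
      (measurableSet_le measurable_const (hφm k).abs).diff
        (Finset.measurableSet_biUnion _ (fun j _ =>
          measurableSet_le measurable_const (hφm j).abs))
    set MU : Set ({x // x ∈ Pf} → ℝ) := {v | l ≤ |ψ v|} with hMU
    have hMUm : MeasurableSet MU := measurableSet_le measurable_const hψm.abs
    have hpreA : TS ⁻¹' MA = A k := by
      rw [hMA, hAdef]
      ext ω
      simp only [Set.mem_preimage, Set.mem_diff, Set.mem_setOf_eq, Set.mem_iUnion,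
        Finset.mem_range, exists_prop, hEdef]
      rw [hφS k le_rfl ω]
      refine and_congr Iff.rfl (not_congr ?_)
      constructor
      · rintro ⟨j, hj, hφj⟩
        exact ⟨j, hj, by rwa [hφS j (le_of_lt hj) ω] at hφj⟩
      · rintro ⟨j, hj, hSj⟩
        exact ⟨j, hj, by rwa [hφS j (le_of_lt hj) ω]⟩
    have hpreU : TP ⁻¹' MU = U k := by
      rw [hMU, hUdef]
      ext ω
      simp only [Set.mem_preimage, Set.mem_setOf_eq]
      rw [hψD ω]
    rw [← hpreA, ← hpreU]
    exact (indepFun_iff_measure_inter_preimage_eq_mul.1 hIF) MA MU hMAm hMUm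
  -- the key estimate per k
  have hkey : ∀ k, P (A k) ≤ t₀ * P (A k) + P (A k ∩ V) := by
    intro k
    rcases Nat.eq_zero_or_pos k with hk0 | hk1
    · subst hk0
      have hA0 : P (A 0) = 0 := measure_mono_null (hAsub 0) (by rw [hE0]; exact measure_empty)
      rw [hA0]
      exact zero_le
    rcases le_or_gt k N with hkN | hkN
    · have hsplitk : P (A k) = P (A k ∩ U k) + P (A k \ U k) :=
        (measure_inter_add_diff _ (hUm k)).symm
      have h1 : P (A k ∩ U k) ≤ t₀ * P (A k) := by
        rw [hindep_k k hk1 hkN, mul_comm]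
        exact mul_le_mul_left (hPU k) _
      have h2 : A k \ U k ⊆ A k ∩ V := by
        rintro ω ⟨hA, hU⟩
        refine ⟨hA, ?_⟩
        have hE : 2*l ≤ |S k ω| := hAsub k hA
        have hD : ¬ (l ≤ |D k ω|) := hU
        push_neg at hD
        have hsum := hsplit k ω
        have habs : |S k ω| ≤ |S N ω| + |D k ω| := by
          have e : S k ω = S N ω - D k ω := by linarith
          rw [e]
          exact abs_sub _ _
        show l ≤ |S N ω|
        linarith
      calc P (A k) = P (A k ∩ U k) + P (A k \ U k) := hsplitk
        _ ≤ t₀ * P (A k) + P (A k ∩ V) := add_le_add h1 (measure_mono h2)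
    · rw [hAtop k hkN]
      simp
  have hM : P (⋃ k, E k) = ∑' k, P (A k) := by
    rw [← hAunion, measure_iUnion hAdis hAm]
  have hsum2 : ∑' k, P (A k ∩ V) ≤ P V := by
    have e := measure_iUnion (μ := P) (f := fun k => A k ∩ V)
      (fun i j hij => ((hAdis hij).mono inf_le_left inf_le_left))
      (fun k => (hAm k).inter hVm)
    rw [← e]
    exact measure_mono (Set.iUnion_subset fun k => Set.inter_subset_right)
  have hmain : P (⋃ k, E k) ≤ t₀ + 1/2 * P (⋃ k, E k) := by
    calc P (⋃ k, E k) = ∑' k, P (A k) := hM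
      _ ≤ ∑' k, (t₀ * P (A k) + P (A k ∩ V)) := ENNReal.tsum_le_tsum hkey
      _ = t₀ * ∑' k, P (A k) + ∑' k, P (A k ∩ V) := by
          rw [ENNReal.tsum_add, ENNReal.tsum_mul_left]
      _ ≤ 1/2 * P (⋃ k, E k) + P V := by
          refine add_le_add ?_ hsum2
          rw [← hM]
          exact mul_le_mul_left hhalf _
      _ ≤ 1/2 * P (⋃ k, E k) + t₀ := add_le_add_right hPV _
      _ = t₀ + 1/2 * P (⋃ k, E k) := add_comm _ _
  have hPM : P (⋃ k, E k) ≤ 2 * t₀ := by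
    have hfin : P (⋃ k, E k) ≠ ∞ := measure_ne_top _ _
    have hhalfP : (1/2 : ℝ≥0∞) * P (⋃ k, E k) = P (⋃ k, E k) / 2 := by
      rw [one_div, ENNReal.div_eq_inv_mul]
    have h1 : P (⋃ k, E k) - 1/2 * P (⋃ k, E k) ≤ t₀ := tsub_le_iff_right.2 hmain
    rw [hhalfP, ENNReal.sub_half hfin] at h1
    calc P (⋃ k, E k) = 2 * (P (⋃ k, E k) / 2) := by
          rw [ENNReal.mul_div_cancel' (by norm_num) (by norm_num)]
      _ ≤ 2 * t₀ := mul_le_mul_right h1 2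
  refine le_trans (measure_mono ?_) (le_trans hPM ?_)
  · intro ω hω
    obtain ⟨j, hj⟩ := hω
    have hjN : j.val ≤ N := Nat.lt_succ_iff.1 j.isLt
    refine Set.mem_iUnion.2 ⟨N - j.val, ?_⟩
    show 2*l ≤ |S (N - j.val) ω|
    rw [htel (N - j.val) (Nat.sub_le _ _) ω]
    have hNj : N - (N - j.val) = j.val := by omega
    rw [hNj, hwN]
    have hwj : w j.val = u j := by
      show u ⟨min j.val N, _⟩ = u j
      congr 1
      apply Fin.ext
      simp [Nat.min_eq_left hjN]
    rw [hwj]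
    exact hj
  · rw [ht₀, show (2:ℝ≥0∞) = ENNReal.ofReal (2:ℝ) by simp,
      ← ENNReal.ofReal_mul (by norm_num)]
    apply le_of_eq
    congr 1
    ring


lemma pathwise_bound {H T : ℝ} (hH : 1 / 2 < H) (hH' : H < 1) (hT : 0 < T) {ε : ℝ} (hε : 0 < ε)
    (f : ℝ → ℝ) (hf : Continuous f) (hf0 : f 0 = 0) {M : ℝ}
    (hMb : ∀ x ∈ Icc (-ε) 0, |f x| ≤ M)
    {s : ℝ} (hs : 0 ≤ s) :
    s ^ (1 - H / 2) * |rsInt (fun x => kf H s x - kf H s (x - ε))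
        (fun x => kdf H s x - kdf H s (x - ε)) f (-ε) 0| ≤ M := by
  have hεle : -ε ≤ (0:ℝ) := by linarith
  have hM0 : 0 ≤ M := le_trans (abs_nonneg _) (hMb 0 ⟨hεle, le_rfl⟩)
  rcases eq_or_lt_of_le hs with hs0 | hs0
  · rw [← hs0, Real.zero_rpow (by norm_num; linarith : (1:ℝ) - H/2 ≠ 0), zero_mul]
    exact hM0
  · have hpneg : H / 2 - 1 ≤ 0 := by linarith
    have hqneg : H / 2 - 2 ≤ 0 := by linarith
    have hpos : ∀ x ∈ Icc (-ε) (0:ℝ), 0 < s - x := fun x hx => by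
      have := hx.2; linarith
    have hpos' : ∀ x ∈ Icc (-ε) (0:ℝ), 0 < s - (x - ε) := fun x hx => by
      have := hpos x hx; linarith
    -- derivative
    have hderiv : ∀ x ∈ uIcc (-ε) (0:ℝ),
        HasDerivAt (fun x => kf H s x - kf H s (x - ε))
          (kdf H s x - kdf H s (x - ε)) x := by
      rw [uIcc_of_le hεle]
      intro x hx
      have h1 := hpos x hx
      have h2 := hpos' x hx
      have d1 : HasDerivAt (fun y => kf H s y) (kdf H s x) x := by
        unfold kf kdf
        have hb : HasDerivAt (fun y : ℝ => s - y) (-1) x := (hasDerivAt_id x).const_sub s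
        have := hb.rpow_const (p := H/2 - 1) (Or.inl h1.ne')
        convert this using 1
        rw [show H/2 - 1 - 1 = H/2 - 2 by ring]
        ring
      have d2 : HasDerivAt (fun y => kf H s (y - ε)) (kdf H s (x - ε)) x := by
        unfold kf kdf
        have hb : HasDerivAt (fun y : ℝ => s - (y - ε)) (-1) x :=
          ((hasDerivAt_id x).sub_const ε).const_sub s
        have := hb.rpow_const (p := H/2 - 1) (Or.inl h2.ne')
        convert this using 1
        rw [show H/2 - 1 - 1 = H/2 - 2 by ring]
        ring
      exact d1.sub d2
    have hcont : ContinuousOn (fun x => kdf H s x - kdf H s (x - ε)) (Icc (-ε) 0) := by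
      have c1 : ContinuousOn (fun x : ℝ => (s - x) ^ (H/2-2)) (Icc (-ε) 0) :=
        (continuousOn_const.sub continuousOn_id).rpow_const
          (fun x hx => Or.inl (ne_of_gt (hpos x hx)))
      have c2 : ContinuousOn (fun x : ℝ => (s - (x - ε)) ^ (H/2-2)) (Icc (-ε) 0) :=
        (continuousOn_const.sub (continuousOn_id.sub continuousOn_const)).rpow_const
          (fun x hx => Or.inl (ne_of_gt (hpos' x hx)))
      exact (continuousOn_const.mul c1).sub (continuousOn_const.mul c2)
    have hcont' : ContinuousOn (fun x => kdf H s x - kdf H s (x - ε)) (uIcc (-ε) 0) := by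
      rw [uIcc_of_le hεle]; exact hcont
    have hint : IntervalIntegrable (fun x => kdf H s x - kdf H s (x - ε)) volume (-ε) 0 :=
      hcont'.intervalIntegrable
    have hFTC : (∫ x in (-ε)..0, (kdf H s x - kdf H s (x - ε)))
        = (kf H s 0 - kf H s (0 - ε)) - (kf H s (-ε) - kf H s (-ε - ε)) :=
      intervalIntegral.integral_eq_sub_of_hasDerivAt hderiv hint
    set g0 : ℝ := kf H s 0 - kf H s (0 - ε) with hg0def
    set gm : ℝ := kf H s (-ε) - kf H s (-ε - ε) with hgmdef
    have hkf_le : ∀ a b : ℝ, 0 < s - a → b ≤ a → kf H s b ≤ kf H s a := by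
      intro a b ha hba
      unfold kf
      exact Real.rpow_le_rpow_of_nonpos ha (by linarith) hpneg
    have hg0 : 0 ≤ g0 := by
      rw [hg0def]
      have := hkf_le 0 (0 - ε) (by simpa using hs0) (by linarith)
      linarith
    have hgm : 0 ≤ gm := by
      rw [hgmdef]
      have := hkf_le (-ε) (-ε - ε) (by linarith) (by linarith)
      linarith
    have hg0le : g0 ≤ kf H s 0 := by
      rw [hg0def]
      have : (0:ℝ) ≤ kf H s (0 - ε) := Real.rpow_nonneg (by linarith) _
      linarith
    have hdgnonneg : ∀ x ∈ Icc (-ε) (0:ℝ), 0 ≤ kdf H s x - kdf H s (x - ε) := by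
      intro x hx
      unfold kdf
      have h1 := hpos x hx
      have hle : (s - (x - ε)) ^ (H/2-2) ≤ (s - x) ^ (H/2-2) :=
        Real.rpow_le_rpow_of_nonpos h1 (by linarith) hqneg
      nlinarith
    have hIdg : (0:ℝ) ≤ ∫ x in (-ε)..0, (kdf H s x - kdf H s (x - ε)) :=
      intervalIntegral.integral_nonneg hεle hdgnonneg
    have hgmg0 : gm ≤ g0 := by rw [hFTC] at hIdg; linarith
    have hintf : IntervalIntegrable (fun x => (kdf H s x - kdf H s (x - ε)) * f x)
        volume (-ε) 0 := (hcont'.mul hf.continuousOn).intervalIntegrable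
    have habs : |∫ x in (-ε)..0, (kdf H s x - kdf H s (x - ε)) * f x|
        ≤ (g0 - gm) * M := by
      have h1 : |∫ x in (-ε)..0, (kdf H s x - kdf H s (x - ε)) * f x|
          ≤ ∫ x in (-ε)..0, |(kdf H s x - kdf H s (x - ε)) * f x| :=
        intervalIntegral.abs_integral_le_integral_abs hεle
      have h2 : (∫ x in (-ε)..0, |(kdf H s x - kdf H s (x - ε)) * f x|)
          ≤ ∫ x in (-ε)..0, (kdf H s x - kdf H s (x - ε)) * M := by
        refine intervalIntegral.integral_mono_on hεle hintf.abs (hint.mul_const M) ?_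
        intro x hx
        rw [abs_mul, abs_of_nonneg (hdgnonneg x hx)]
        exact mul_le_mul_of_nonneg_left (hMb x hx) (hdgnonneg x hx)
      have h3 : (∫ x in (-ε)..0, (kdf H s x - kdf H s (x - ε)) * M)
          = (g0 - gm) * M := by
        rw [intervalIntegral.integral_mul_const, hFTC]
      linarith
    have hrs : |rsInt (fun x => kf H s x - kf H s (x - ε))
        (fun x => kdf H s x - kdf H s (x - ε)) f (-ε) 0| ≤ g0 * M := by
      have hre : rsInt (fun x => kf H s x - kf H s (x - ε))
          (fun x => kdf H s x - kdf H s (x - ε)) f (-ε) 0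
          = -(gm * f (-ε)) - ∫ x in (-ε)..0, (kdf H s x - kdf H s (x - ε)) * f x := by
        simp only [rsInt, hf0, hg0def, hgmdef]
        ring
      rw [hre]
      have h1 : |-(gm * f (-ε)) - ∫ x in (-ε)..0, (kdf H s x - kdf H s (x - ε)) * f x|
          ≤ |gm * f (-ε)| + |∫ x in (-ε)..0, (kdf H s x - kdf H s (x - ε)) * f x| := by
        rw [show -(gm * f (-ε)) - (∫ x in (-ε)..0, (kdf H s x - kdf H s (x - ε)) * f x)
          = -((gm * f (-ε)) + ∫ x in (-ε)..0, (kdf H s x - kdf H s (x - ε)) * f x) by ring,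
          abs_neg]
        exact abs_add_le _ _
      have h2 : |gm * f (-ε)| ≤ gm * M := by
        rw [abs_mul, abs_of_nonneg hgm]
        exact mul_le_mul_of_nonneg_left (hMb (-ε) ⟨le_rfl, hεle⟩) hgm
      linarith
    have hone : s ^ (1 - H/2) * s ^ (H/2 - 1) = 1 := by
      rw [← Real.rpow_add hs0, show (1 - H/2) + (H/2 - 1) = 0 by ring, Real.rpow_zero]
    have hspow : (0:ℝ) ≤ s ^ (1 - H/2) := Real.rpow_nonneg hs _
    have hkf0 : kf H s 0 = s ^ (H/2 - 1) := by unfold kf; rw [sub_zero]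
    have hstep1 : s ^ (1 - H/2) * |rsInt (fun x => kf H s x - kf H s (x - ε))
        (fun x => kdf H s x - kdf H s (x - ε)) f (-ε) 0|
        ≤ s ^ (1 - H/2) * (g0 * M) := mul_le_mul_of_nonneg_left hrs hspow
    have hstep2 : s ^ (1 - H/2) * (g0 * M) ≤ s ^ (1 - H/2) * (s ^ (H/2 - 1) * M) := by
      refine mul_le_mul_of_nonneg_left ?_ hspow
      rw [← hkf0]
      exact mul_le_mul_of_nonneg_right hg0le hM0
    have hstep3 : s ^ (1 - H/2) * (s ^ (H/2 - 1) * M) = M := by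
      rw [← mul_assoc, hone, one_mul]
    linarith

lemma countable_tail {Ω : Type*} [MeasurableSpace Ω] (P : Measure Ω) [IsProbabilityMeasure P]
    (B : ℝ → Ω → ℝ) (hmeas : ∀ t, Measurable (B t))
    (hlaw : ∀ s t : ℝ, s ≤ t →
      P.map (fun ω => B t ω - B s ω) = gaussianReal 0 (Real.toNNReal (t - s)))
    (hindep : ∀ (n : ℕ) (u : Fin (n + 1) → ℝ), Monotone u →
      iIndepFun (m := fun _ => Real.measurableSpace)
        (fun i : Fin n => fun ω => B (u i.succ) ω - B (u i.castSucc) ω) P)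
    {ε l : ℝ} (hε : 0 < ε) (hl : 0 < l)
    (hhalf : ENNReal.ofReal (2 * rexp (-(l^2) / (2*ε))) ≤ 1/2)
    (D : Set ℝ) (hDc : D.Countable) (hDsub : D ⊆ Icc (-ε) 0) :
    P {ω | ∃ x ∈ D, 2*l ≤ |B 0 ω - B x ω|}
      ≤ ENNReal.ofReal (4 * rexp (-(l^2) / (2*ε))) := by
  classical
  rcases D.eq_empty_or_nonempty with hD | hD
  · subst hD
    simp only [Set.mem_empty_iff_false, false_and, exists_false, Set.setOf_false,
      exists_prop]
    simp
  obtain ⟨d, hd⟩ := Set.Countable.exists_eq_range hDc hD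
  have hdD : ∀ i, d i ∈ D := fun i => hd ▸ Set.mem_range_self i
  have hfin : ∀ m : ℕ,
      P {ω | ∃ i ∈ Finset.range (m+1), 2*l ≤ |B 0 ω - B (d i) ω|}
        ≤ ENNReal.ofReal (4 * rexp (-(l^2) / (2*ε))) := by
    intro m
    set G : Finset ℝ := insert 0 ((Finset.range (m+1)).image d) with hG
    have hGne : G.Nonempty := ⟨0, Finset.mem_insert_self _ _⟩
    have hcard : G.card = (G.card - 1) + 1 := by
      have := Finset.card_pos.2 hGne; omega
    set N : ℕ := G.card - 1 with hN
    set e := G.orderIsoOfFin hcard with he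
    set u : Fin (N+1) → ℝ := fun i => (e i : ℝ) with hu
    have humono : Monotone u := fun i j hij => Subtype.coe_le_coe.2 (e.monotone hij)
    have huG : ∀ i, u i ∈ G := fun i => (e i).2
    have hGle : ∀ x ∈ G, -ε ≤ x ∧ x ≤ 0 := by
      intro x hx
      rw [hG, Finset.mem_insert] at hx
      rcases hx with h0 | hx
      · subst h0; exact ⟨by linarith, le_rfl⟩
      · obtain ⟨i, _, hi⟩ := Finset.mem_image.1 hx
        have := hDsub (hdD i)
        rw [← hi]
        exact ⟨this.1, this.2⟩
    have hmemG : ∀ x ∈ G, ∃ i, u i = x := by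
      intro x hx
      exact ⟨e.symm ⟨x, hx⟩, by rw [hu]; simp⟩
    have hulast : u (Fin.last N) = 0 := by
      obtain ⟨i0, hi0⟩ := hmemG 0 (Finset.mem_insert_self _ _)
      have h1 : u i0 ≤ u (Fin.last N) := humono (Fin.le_last i0)
      have h2 : u (Fin.last N) ≤ 0 := (hGle _ (huG _)).2
      linarith [hi0 ▸ h1]
    have hspan : u (Fin.last N) - u 0 ≤ ε := by
      have := (hGle _ (huG 0)).1
      rw [hulast]
      linarith
    refine le_trans (measure_mono ?_)
      (etemadi_max P B hmeas hlaw hindep N u humono hε hl hspan hhalf)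
    rintro ω ⟨i, hi, h2l⟩
    have hdG : d i ∈ G := Finset.mem_insert_of_mem (Finset.mem_image_of_mem d hi)
    obtain ⟨j, hj⟩ := hmemG _ hdG
    exact ⟨j, by rwa [hulast, hj]⟩
  have hset : {ω | ∃ x ∈ D, 2*l ≤ |B 0 ω - B x ω|}
      = ⋃ m : ℕ, {ω | ∃ i ∈ Finset.range (m+1), 2*l ≤ |B 0 ω - B (d i) ω|} := by
    ext ω
    simp only [Set.mem_setOf_eq, Set.mem_iUnion, Finset.mem_range]
    constructor
    · rintro ⟨x, hxD, hx⟩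
      rw [hd] at hxD
      obtain ⟨i, rfl⟩ := hxD
      exact ⟨i, i, Nat.lt_succ_self i, hx⟩
    · rintro ⟨m, i, _, hi⟩
      exact ⟨d i, hdD i, hi⟩
  rw [hset]
  have hmono2 : Monotone (fun m : ℕ =>
      {ω | ∃ i ∈ Finset.range (m+1), 2*l ≤ |B 0 ω - B (d i) ω|}) := by
    intro a b hab ω
    rintro ⟨i, hi, h⟩
    exact ⟨i, Finset.mem_range.2 (lt_of_lt_of_le (Finset.mem_range.1 hi) (by omega)), h⟩
  rw [hmono2.measure_iUnion]
  exact iSup_le hfin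

set_option maxHeartbeats 2000000 in
/-- Lemma G1. -/
theorem lemma_G1
    (P : Measure Ω) [IsProbabilityMeasure P]
    (H T a β : ℝ) (hH : 1 / 2 < H) (hH' : H < 1) (hT : 0 < T) (ha : a < 0)
    (hβl : (1 - H / 2) / (3 - 2 * H) < β) (hβr : β < 1 / 2)
    (B : ℝ → Ω → ℝ) (hB : IsTwoSidedBM P B) :
    ∀ q : ℝ, 0 < q → ∃ C : ℝ, 0 < C ∧
      (fun n : ℕ => (P {ω | C * alphaRate β n <
          ⨆ s ∈ Icc (0 : ℝ) T, s ^ (1 - H / 2) *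
            |rsInt (fun x => kf H s x - kf H s (x - epsSeq H β n))
              (fun x => kdf H s x - kdf H s (x - epsSeq H β n))
              (fun x => B x ω) (-(epsSeq H β n)) 0|}).toReal)
      =o[atTop] fun n : ℕ => (n : ℝ) ^ (-q) := by
  intro q hq
  refine ⟨1, one_pos, ?_⟩
  have hmeas := hB.1
  have hae0 := hB.2.1
  have haec := hB.2.2.1
  have hlaw := hB.2.2.2.1
  have hindep := hB.2.2.2.2
  have hH2 : (0:ℝ) < 1 - H/2 := by linarith
  have h3 : (0:ℝ) < 3 - 2*H := by linarith
  have hβpos : 0 < β := lt_trans (div_pos hH2 h3) hβl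
  have hδpos : 0 < β / (1 - H/2) - (1 - 2*β) := by
    have h1 : (1 - H/2)/(3-2*H) < β := hβl
    rw [div_lt_iff₀ h3] at h1
    rw [sub_pos, lt_div_iff₀ hH2]
    nlinarith
  set δ := β / (1 - H/2) - (1 - 2*β) with hδdef
  rw [Asymptotics.isLittleO_iff]
  intro c hc
  have hev1 : ∀ᶠ n : ℕ in atTop, 8*(q+1) ≤ (n:ℝ)^δ := by
    have := (tendsto_rpow_atTop hδpos).comp (tendsto_natCast_atTop_atTop (R := ℝ))
    exact this.eventually_ge_atTop _
  have hev2 : ∀ᶠ n : ℕ in atTop, (4:ℝ)/c ≤ (n:ℝ) :=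
    (tendsto_natCast_atTop_atTop (R := ℝ)).eventually_ge_atTop _
  filter_upwards [hev1, hev2, eventually_ge_atTop 4] with n hnδ hnc hn4
  have hn1 : (1:ℝ) ≤ (n:ℝ) := by
    have : (4:ℝ) ≤ (n:ℝ) := by exact_mod_cast hn4
    linarith
  have hnpos : (0:ℝ) < n := by linarith
  have hn4' : (4:ℝ) ≤ (n:ℝ) := by exact_mod_cast hn4
  have hlog1 : (1:ℝ) ≤ Real.log n := by
    rw [Real.le_log_iff_exp_le hnpos]
    have := Real.exp_one_lt_d9
    linarith
  have hlogpos : (0:ℝ) < Real.log n := by linarith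
  set ε := epsSeq H β n with hεdef
  set α := alphaRate β n with hαdef
  have hεval : ε = (n:ℝ)^(-(β/(1-H/2))) := by rw [hεdef]; rfl
  have hεpos : 0 < ε := by rw [hεval]; exact Real.rpow_pos_of_pos hnpos _
  have hLpow : (1:ℝ) ≤ Real.log n ^ ((5:ℝ)/2) :=
    Real.one_le_rpow hlog1 (by norm_num)
  have hαval : α = (n:ℝ)^(-(1/2 - β)) * Real.log n ^ ((5:ℝ)/2) := by rw [hαdef]; rfl
  have hαpos : 0 < α := by
    rw [hαval]
    exact mul_pos (Real.rpow_pos_of_pos hnpos _) (lt_of_lt_of_le one_pos hLpow)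
  set l := α/2 with hldef
  have hlpos : 0 < l := by rw [hldef]; positivity
  have hα2 : α^2 = (n:ℝ)^(-(1-2*β)) * Real.log n^(5:ℝ) := by
    have e1 : ((n:ℝ)^(-(1/2-β)))^2 = (n:ℝ)^(-(1-2*β)) := by
      rw [pow_two, ← Real.rpow_add hnpos]; congr 1; ring
    have e2 : (Real.log n^((5:ℝ)/2))^2 = Real.log n^(5:ℝ) := by
      rw [pow_two, ← Real.rpow_add hlogpos]; congr 1; norm_num
    rw [hαval, mul_pow, e1, e2]
  have hsplitexp : (n:ℝ)^(-(1-2*β)) = (n:ℝ)^δ * (n:ℝ)^(-(β/(1-H/2))) := by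
    rw [← Real.rpow_add hnpos]
    congr 1
    rw [hδdef]
    ring
  have hkey : (q+1) * Real.log n ≤ l^2/(2*ε) := by
    have hεne : ((n:ℝ)^(-(β/(1-H/2)))) ≠ 0 := ne_of_gt (Real.rpow_pos_of_pos hnpos _)
    have hle2 : l^2/(2*ε) = α^2/(8*ε) := by
      rw [hldef]
      field_simp
      ring
    have heq : α^2/(8*ε) = (n:ℝ)^δ * Real.log n^(5:ℝ)/8 := by
      rw [hα2, hεval, hsplitexp]
      field_simp
    rw [hle2, heq]
    have h51 : Real.log n ≤ Real.log n ^ (5:ℝ) := by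
      calc Real.log n = Real.log n ^ (1:ℝ) := (Real.rpow_one _).symm
      _ ≤ _ := Real.rpow_le_rpow_of_exponent_le hlog1 (by norm_num)
    have hnδ0 : (0:ℝ) ≤ (n:ℝ)^δ := (Real.rpow_pos_of_pos hnpos _).le
    nlinarith [mul_le_mul_of_nonneg_right hnδ (le_trans zero_le_one hlog1),
      mul_le_mul_of_nonneg_left h51 hnδ0]
  have htail : rexp (-(l^2) / (2*ε)) ≤ (n:ℝ)^(-(q+1)) := by
    rw [Real.rpow_def_of_pos hnpos]
    apply Real.exp_le_exp.2
    rw [neg_div]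
    nlinarith [hkey]
  have hq1 : (n:ℝ)^(-(q+1)) ≤ (n:ℝ)⁻¹ := by
    rw [← Real.rpow_neg_one]
    exact Real.rpow_le_rpow_of_exponent_le hn1 (by linarith)
  have hninv : (n:ℝ)⁻¹ ≤ 1/4 := by
    rw [show (1:ℝ)/4 = (4:ℝ)⁻¹ by norm_num]
    exact inv_anti₀ (by norm_num) hn4'
  have hhalf : ENNReal.ofReal (2 * rexp (-(l^2) / (2*ε))) ≤ 1/2 := by
    have h1 : 2 * rexp (-(l^2) / (2*ε)) ≤ (1:ℝ)/2 := by linarith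
    calc ENNReal.ofReal (2 * rexp (-(l^2) / (2*ε)))
        ≤ ENNReal.ofReal ((1:ℝ)/2) := ENNReal.ofReal_le_ofReal h1
      _ = 1/2 := by
          rw [ENNReal.ofReal_div_of_pos (by norm_num), ENNReal.ofReal_one,
            ENNReal.ofReal_ofNat]
  set Dset : Set ℝ := insert (-ε) {x : ℝ | (∃ r : ℚ, (r:ℝ) = x) ∧ -ε < x ∧ x < 0}
    with hDset
  have hDc : Dset.Countable := by
    refine Set.Countable.insert _ ?_
    refine Set.Countable.mono ?_ (Set.countable_range ((↑) : ℚ → ℝ))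
    rintro x ⟨⟨r, hr⟩, _⟩
    exact ⟨r, hr⟩
  have hDsub : Dset ⊆ Icc (-ε) 0 := by
    intro x hx
    rcases hx with rfl | hx
    · exact ⟨le_rfl, by linarith⟩
    · exact ⟨le_of_lt hx.2.1, le_of_lt hx.2.2⟩
  have hBadnull : P {ω | ¬ (B 0 ω = 0 ∧ Continuous fun t => B t ω)} = 0 := by
    have h := hae0.and haec
    rw [ae_iff] at h
    exact h
  have hincl : {ω | 1 * α < ⨆ s ∈ Icc (0:ℝ) T, s ^ (1 - H / 2) *
        |rsInt (fun x => kf H s x - kf H s (x - ε))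
          (fun x => kdf H s x - kdf H s (x - ε))
          (fun x => B x ω) (-ε) 0|}
      ⊆ {ω | ∃ x ∈ Dset, 2*l ≤ |B 0 ω - B x ω|}
        ∪ {ω | ¬ (B 0 ω = 0 ∧ Continuous fun t => B t ω)} := by
    intro ω hev
    by_cases hg : (B 0 ω = 0 ∧ Continuous fun t => B t ω)
    swap
    · exact Or.inr hg
    left
    rw [Set.mem_setOf_eq, one_mul] at hev
    have hcontabs : Continuous (fun x => |B x ω|) := hg.2.abs
    obtain ⟨x₀, hx₀, hmax⟩ := isCompact_Icc.exists_isMaxOn (s := Icc (-ε) (0:ℝ))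
      ⟨0, ⟨by linarith, le_rfl⟩⟩ hcontabs.continuousOn
    set M := |B x₀ ω| with hMdef
    have hM0 : 0 ≤ M := abs_nonneg _
    have hMb : ∀ x ∈ Icc (-ε) (0:ℝ), |B x ω| ≤ M := fun x hx => hmax hx
    have hsup : (⨆ s ∈ Icc (0:ℝ) T, s ^ (1 - H / 2) *
        |rsInt (fun x => kf H s x - kf H s (x - ε))
          (fun x => kdf H s x - kdf H s (x - ε))
          (fun x => B x ω) (-ε) 0|) ≤ M := by
      refine Real.iSup_le (fun s => Real.iSup_le (fun hs => ?_) hM0) hM0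
      exact pathwise_bound hH hH' hT hεpos (fun x => B x ω) hg.2 hg.1 hMb hs.1
    have hαM : α < M := lt_of_lt_of_le hev hsup
    have h2lα : 2*l = α := by rw [hldef]; ring
    by_cases hx0e : x₀ = -ε
    · refine ⟨-ε, Set.mem_insert _ _, ?_⟩
      rw [hg.1, zero_sub, abs_neg, h2lα]
      rw [hx0e] at hMdef
      rw [← hMdef]
      exact hαM.le
    · have hx0lt : -ε < x₀ := lt_of_le_of_ne hx₀.1 (Ne.symm hx0e)
      have hx0ne0 : x₀ ≠ 0 := by
        intro h0
        rw [h0] at hMdef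
        rw [hg.1] at hMdef
        simp at hMdef
        rw [hMdef] at hαM
        linarith
      have hx0lt0 : x₀ < 0 := lt_of_le_of_ne hx₀.2 hx0ne0
      have hopen : IsOpen ((fun x => |B x ω|) ⁻¹' Ioi α) := isOpen_Ioi.preimage hcontabs
      have hx₀mem : x₀ ∈ (fun x => |B x ω|) ⁻¹' Ioi α := by
        rw [Set.mem_preimage, Set.mem_Ioi, ← hMdef]
        exact hαM
      obtain ⟨dd, hdd, hball⟩ := Metric.isOpen_iff.1 hopen x₀ hx₀mem
      have hlo : max (x₀ - dd) (-ε) < x₀ := max_lt (by linarith) hx0lt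
      obtain ⟨r, hr1, hr2⟩ := exists_rat_btwn hlo
      have hrball : (r:ℝ) ∈ Metric.ball x₀ dd := by
        rw [Metric.mem_ball, Real.dist_eq, abs_sub_lt_iff]
        constructor
        · linarith
        · have := le_max_left (x₀ - dd) (-ε)
          linarith
      have hrgt : α < |B (r:ℝ) ω| := hball hrball
      refine ⟨(r:ℝ), Set.mem_insert_of_mem _ ⟨⟨r, rfl⟩, ?_, by linarith⟩, ?_⟩
      · have := le_max_right (x₀ - dd) (-ε)
        linarith
      · rw [hg.1, zero_sub, abs_neg, h2lα]
        exact hrgt.le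
  have hPEv : P {ω | 1 * α < ⨆ s ∈ Icc (0:ℝ) T, s ^ (1 - H / 2) *
        |rsInt (fun x => kf H s x - kf H s (x - ε))
          (fun x => kdf H s x - kdf H s (x - ε))
          (fun x => B x ω) (-ε) 0|}
      ≤ ENNReal.ofReal (4 * rexp (-(l^2) / (2*ε))) := by
    refine le_trans (measure_mono hincl) ?_
    refine le_trans (measure_union_le _ _) ?_
    rw [hBadnull, add_zero]
    exact countable_tail P B hmeas hlaw hindep hεpos hlpos hhalf Dset hDc hDsub
  have hbound : (P {ω | 1 * α < ⨆ s ∈ Icc (0:ℝ) T, s ^ (1 - H / 2) *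
        |rsInt (fun x => kf H s x - kf H s (x - ε))
          (fun x => kdf H s x - kdf H s (x - ε))
          (fun x => B x ω) (-ε) 0|}).toReal
      ≤ 4 * rexp (-(l^2) / (2*ε)) :=
    ENNReal.toReal_le_of_le_ofReal (by positivity) hPEv
  have hsplitq : (n:ℝ)^(-(q+1)) = (n:ℝ)^(-q) * (n:ℝ)⁻¹ := by
    rw [← Real.rpow_neg_one ((n:ℝ)), ← Real.rpow_add hnpos]
    congr 1
    ring
  have h4n : 4 * (n:ℝ)⁻¹ ≤ c := by
    have h4cn : 4 ≤ (n:ℝ) * c := (div_le_iff₀ hc).1 hnc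
    have hninv' : (n:ℝ) * (n:ℝ)⁻¹ = 1 := mul_inv_cancel₀ (ne_of_gt hnpos)
    nlinarith
  have hpow0 : (0:ℝ) ≤ (n:ℝ)^(-q) := Real.rpow_nonneg hnpos.le _
  have hfinal : 4 * (n:ℝ)^(-(q+1)) ≤ c * (n:ℝ)^(-q) := by
    rw [hsplitq]
    calc 4 * ((n:ℝ)^(-q) * (n:ℝ)⁻¹) = (4 * (n:ℝ)⁻¹) * (n:ℝ)^(-q) := by ring
    _ ≤ c * (n:ℝ)^(-q) := mul_le_mul_of_nonneg_right h4n hpow0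
  rw [Real.norm_eq_abs, Real.norm_eq_abs, abs_of_nonneg ENNReal.toReal_nonneg,
    abs_of_nonneg hpow0]
  linarith
end
end

section
/- There exists a constant C > 0 depending only on H and T such that for every ε with 0 < ε ≤ T: ∫_0^{T−ε} ( ∫_0^{x₁} ( ∫_{x₁}^{x₁+ε} (s−x₁)^{H/2−1}(s−x₂)^{H/2−1} ds )² dx₂ ) dx₁ ≤ C ε^{2H−1}. -/
/- Formalization of results from "A strong convergence to the Rosenblatt process"
by J. Garzón, S. Torres and C.A. Tudor.

Conventions used throughout:
* Brownian motions are encoded by the predicates `IsTwoSidedBM` / `IsBM` below.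
* Wiener integrals of `C¹` deterministic integrands and pathwise Riemann–Stieltjes
  integrals against the (piecewise linear) transport processes are both encoded via
  the integration-by-parts formula (`rsInt`), with which they coincide (a.s. in the
  Wiener case).
* Double Wiener–Itô integrals (the processes `X^{2,H}`, `X^{3,H}` and the Rosenblatt
  process itself) are characterized as `L²(P)`-limits of their natural
  `ε`-regularizations, in which the singular kernel `(s-x)^{H/2-1}` is replaced by
  `(s+ε-x)^{H/2-1}` and the diagonal trace term is subtracted. -/

open MeasureTheory ProbabilityTheory Real Filter Set Asymptotics
open scoped ENNReal NNReal

noncomputable section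

variable {Ω : Type*} [MeasurableSpace Ω]

namespace KernelAuxGST

/-- `(a^r)^2 = a^(2r)` for `a ≥ 0`. -/
lemma sq_rpow {a : ℝ} (ha : 0 ≤ a) (r : ℝ) : (a ^ r) ^ 2 = a ^ (2 * r) := by
  rw [show (2:ℝ) * r = r * 2 from mul_comm 2 r, Real.rpow_mul ha,
    ← Real.rpow_natCast (a ^ r) 2]
  norm_num

lemma shiftInt {r : ℝ} (hr : -1 < r) (c a b : ℝ) :
    IntervalIntegrable (fun s => (s - c) ^ r) volume a b := by
  have h := (intervalIntegral.intervalIntegrable_rpow' (a := a - c) (b := b - c) hr).comp_sub_right c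
  simpa using h

lemma reflInt {r : ℝ} (hr : -1 < r) (c a b : ℝ) :
    IntervalIntegrable (fun s => (c - s) ^ r) volume a b := by
  have h := (intervalIntegral.intervalIntegrable_rpow' (a := c - a) (b := c - b) hr).comp_sub_left c
  simpa using h

lemma shiftEval {r : ℝ} (hr : -1 < r) (c e : ℝ) (he : 0 ≤ e) :
    ∫ s in c..(c + e), (s - c) ^ r = e ^ (r + 1) / (r + 1) := by
  have h := intervalIntegral.integral_comp_sub_right (a := c) (b := c + e) (fun x => x ^ r) c
  rw [show c - c = (0:ℝ) by ring, show c + e - c = e by ring] at h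
  rw [h, integral_rpow (Or.inl hr), Real.zero_rpow (by linarith : r + 1 ≠ 0), sub_zero]

lemma reflEval {r : ℝ} (hr : -1 < r) (c a : ℝ) :
    ∫ s in a..c, (c - s) ^ r = (c - a) ^ (r + 1) / (r + 1) := by
  have h := intervalIntegral.integral_comp_sub_left (a := a) (b := c) (fun x => x ^ r) c
  rw [show c - c = (0:ℝ) by ring] at h
  rw [h, integral_rpow (Or.inl hr), Real.zero_rpow (by linarith : r + 1 ≠ 0), sub_zero]

variable {H : ℝ}

lemma K_nonneg (hH' : H < 1) {x₁ x₂ a b : ℝ} (hx : x₂ ≤ x₁) (ha : x₁ ≤ a) (hab : a ≤ b) :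
    0 ≤ ∫ s in a..b, (s - x₁) ^ (H / 2 - 1) * (s - x₂) ^ (H / 2 - 1) :=
  intervalIntegral.integral_nonneg hab (fun s hs =>
    mul_nonneg (Real.rpow_nonneg (by linarith [hs.1]) _)
      (Real.rpow_nonneg (by linarith [hs.1]) _))

lemma K_integrable (hH : 1 / 2 < H) (hH' : H < 1) {x₁ x₂ b : ℝ} (hx : x₂ < x₁) (hb : x₁ ≤ b) :
    IntervalIntegrable (fun s => (s - x₁) ^ (H / 2 - 1) * (s - x₂) ^ (H / 2 - 1)) volume x₁ b := by
  have hp1 : (-1:ℝ) < H / 2 - 1 := by linarith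
  have hpneg : H / 2 - 1 ≤ 0 := by linarith
  rw [intervalIntegrable_iff_integrableOn_Ioc_of_le hb]
  have hmeas : AEStronglyMeasurable
      (fun s => (s - x₁) ^ (H / 2 - 1) * (s - x₂) ^ (H / 2 - 1))
      (volume.restrict (Ioc x₁ b)) := by
    refine ContinuousOn.aestronglyMeasurable ?_ measurableSet_Ioc
    refine ContinuousOn.mul ?_ ?_
    · exact (continuousOn_id.sub continuousOn_const).rpow_const
        (fun s hs => Or.inl (by have := hs.1; intro h; simp only [Pi.sub_apply, id_eq] at h; rw [sub_eq_zero] at h; nlinarith))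
    · exact (continuousOn_id.sub continuousOn_const).rpow_const
        (fun s hs => Or.inl (by have := hs.1; intro h; simp only [Pi.sub_apply, id_eq] at h; rw [sub_eq_zero] at h; nlinarith))
  have hg : IntegrableOn (fun s => (x₁ - x₂) ^ (H / 2 - 1) * (s - x₁) ^ (H / 2 - 1))
      (Ioc x₁ b) volume := by
    rw [← intervalIntegrable_iff_integrableOn_Ioc_of_le hb]
    exact (shiftInt hp1 x₁ x₁ b).const_mul _
  refine Integrable.mono hg hmeas ?_
  filter_upwards [ae_restrict_mem measurableSet_Ioc] with s hs
  have h1 : (0:ℝ) < s - x₁ := by linarith [hs.1]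
  have h2 : (0:ℝ) < x₁ - x₂ := by linarith
  have hle : (s - x₂) ^ (H / 2 - 1) ≤ (x₁ - x₂) ^ (H / 2 - 1) :=
    Real.rpow_le_rpow_of_nonpos h2 (by linarith) hpneg
  rw [Real.norm_eq_abs, Real.norm_eq_abs,
    abs_of_nonneg (mul_nonneg (Real.rpow_nonneg h1.le _) (Real.rpow_nonneg (by linarith) _)),
    abs_of_nonneg (mul_nonneg (Real.rpow_nonneg h2.le _) (Real.rpow_nonneg h1.le _))]
  calc (s - x₁) ^ (H / 2 - 1) * (s - x₂) ^ (H / 2 - 1)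
      ≤ (s - x₁) ^ (H / 2 - 1) * (x₁ - x₂) ^ (H / 2 - 1) :=
        mul_le_mul_of_nonneg_left hle (Real.rpow_nonneg h1.le _)
    _ = (x₁ - x₂) ^ (H / 2 - 1) * (s - x₁) ^ (H / 2 - 1) := mul_comm _ _

lemma bound_C (hH : 1 / 2 < H) (hH' : H < 1) {x₁ x₂ e : ℝ} (hx : x₂ < x₁) (he : 0 ≤ e) :
    ∫ s in x₁..(x₁ + e), (s - x₁) ^ (H / 2 - 1) * (s - x₂) ^ (H / 2 - 1)
      ≤ (x₁ - x₂) ^ (H / 2 - 1) * (e ^ (H / 2) / (H / 2)) := by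
  have hp1 : (-1:ℝ) < H / 2 - 1 := by linarith
  have hb : x₁ ≤ x₁ + e := by linarith
  have h1 : ∫ s in x₁..(x₁ + e), (s - x₁) ^ (H / 2 - 1) * (s - x₂) ^ (H / 2 - 1)
      ≤ ∫ s in x₁..(x₁ + e), (x₁ - x₂) ^ (H / 2 - 1) * (s - x₁) ^ (H / 2 - 1) := by
    refine intervalIntegral.integral_mono_on hb (K_integrable hH hH' hx hb)
      ((shiftInt hp1 x₁ _ _).const_mul _) (fun s hs => ?_)
    have h2 : (0:ℝ) < x₁ - x₂ := by linarith
    have hle : (s - x₂) ^ (H / 2 - 1) ≤ (x₁ - x₂) ^ (H / 2 - 1) :=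
      Real.rpow_le_rpow_of_nonpos h2 (by linarith [hs.1]) (by linarith)
    calc (s - x₁) ^ (H / 2 - 1) * (s - x₂) ^ (H / 2 - 1)
        ≤ (s - x₁) ^ (H / 2 - 1) * (x₁ - x₂) ^ (H / 2 - 1) :=
          mul_le_mul_of_nonneg_left hle (Real.rpow_nonneg (by linarith [hs.1]) _)
      _ = (x₁ - x₂) ^ (H / 2 - 1) * (s - x₁) ^ (H / 2 - 1) := mul_comm _ _
  rw [intervalIntegral.integral_const_mul, shiftEval hp1 x₁ e he,
    show H / 2 - 1 + 1 = H / 2 by ring] at h1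
  exact h1

lemma bound_D (hH : 1 / 2 < H) (hH' : H < 1) {x₁ x₂ d e : ℝ} (hx : x₂ ≤ x₁)
    (hd : 0 < d) (hde : d ≤ e) :
    ∫ s in (x₁ + d)..(x₁ + e), (s - x₁) ^ (H / 2 - 1) * (s - x₂) ^ (H / 2 - 1)
      ≤ d ^ (H - 1) / (1 - H) := by
  have hab : x₁ + d ≤ x₁ + e := by linarith
  have huIcc : uIcc (x₁ + d) (x₁ + e) = Icc (x₁ + d) (x₁ + e) := uIcc_of_le hab
  have hKc : ContinuousOn (fun s => (s - x₁) ^ (H / 2 - 1) * (s - x₂) ^ (H / 2 - 1))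
      (uIcc (x₁ + d) (x₁ + e)) := by
    rw [huIcc]
    refine ContinuousOn.mul ?_ ?_
    · exact (continuousOn_id.sub continuousOn_const).rpow_const
        (fun s hs => Or.inl (by have := hs.1; intro h; simp only [Pi.sub_apply, id_eq] at h; rw [sub_eq_zero] at h; nlinarith))
    · exact (continuousOn_id.sub continuousOn_const).rpow_const
        (fun s hs => Or.inl (by have := hs.1; intro h; simp only [Pi.sub_apply, id_eq] at h; rw [sub_eq_zero] at h; nlinarith))
  have hgc : ContinuousOn (fun s => (s - x₁) ^ (H - 2)) (uIcc (x₁ + d) (x₁ + e)) := by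
    rw [huIcc]
    exact (continuousOn_id.sub continuousOn_const).rpow_const
      (fun s hs => Or.inl (by have := hs.1; intro h; simp only [Pi.sub_apply, id_eq] at h; rw [sub_eq_zero] at h; nlinarith))
  have h1 : ∫ s in (x₁ + d)..(x₁ + e), (s - x₁) ^ (H / 2 - 1) * (s - x₂) ^ (H / 2 - 1)
      ≤ ∫ s in (x₁ + d)..(x₁ + e), (s - x₁) ^ (H - 2) := by
    refine intervalIntegral.integral_mono_on hab hKc.intervalIntegrable
      hgc.intervalIntegrable (fun s hs => ?_)
    have h1 : (0:ℝ) < s - x₁ := by linarith [hs.1]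
    have hle : (s - x₂) ^ (H / 2 - 1) ≤ (s - x₁) ^ (H / 2 - 1) :=
      Real.rpow_le_rpow_of_nonpos h1 (by linarith) (by linarith)
    calc (s - x₁) ^ (H / 2 - 1) * (s - x₂) ^ (H / 2 - 1)
        ≤ (s - x₁) ^ (H / 2 - 1) * (s - x₁) ^ (H / 2 - 1) :=
          mul_le_mul_of_nonneg_left hle (Real.rpow_nonneg h1.le _)
      _ = (s - x₁) ^ (H - 2) := by
          rw [← Real.rpow_add h1, show H / 2 - 1 + (H / 2 - 1) = H - 2 by ring]
  have h2 : ∫ s in (x₁ + d)..(x₁ + e), (s - x₁) ^ (H - 2)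
      = (e ^ (H - 1) - d ^ (H - 1)) / (H - 1) := by
    have h := intervalIntegral.integral_comp_sub_right (a := x₁ + d) (b := x₁ + e)
      (fun x => x ^ (H - 2)) x₁
    rw [show x₁ + d - x₁ = d by ring, show x₁ + e - x₁ = e by ring] at h
    rw [h, integral_rpow (Or.inr ⟨by intro hc; rw [sub_eq_iff_eq_add] at hc; linarith,
      notMem_uIcc_of_lt hd (by linarith)⟩), show H - 2 + 1 = H - 1 by ring]
  rw [h2] at h1
  refine h1.trans ?_
  have h3 : (e ^ (H - 1) - d ^ (H - 1)) / (H - 1)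
      = (d ^ (H - 1) - e ^ (H - 1)) / (1 - H) := by
    rw [div_eq_div_iff (by linarith) (by linarith)]; ring
  rw [h3]
  have he1 : (0:ℝ) ≤ e ^ (H - 1) := Real.rpow_nonneg (by linarith) _
  have hd1 : (0:ℝ) ≤ d ^ (H - 1) := Real.rpow_nonneg hd.le _
  gcongr
  · linarith


lemma rpow_helper (hH : 1 / 2 < H) (hH' : H < 1) {d : ℝ} (hd : 0 < d) :
    d ^ (H / 2 - 1) * (d ^ (H / 2) / (H / 2)) = 2 / H * d ^ (H - 1) := by
  rw [mul_div_assoc', ← Real.rpow_add hd, show H / 2 - 1 + H / 2 = H - 1 by ring]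
  have h0 : H ≠ 0 := by linarith
  field_simp

lemma bound_E (hH : 1 / 2 < H) (hH' : H < 1) {x₁ x₂ e : ℝ} (hx : x₂ < x₁) (he : 0 < e) :
    ∫ s in x₁..(x₁ + e), (s - x₁) ^ (H / 2 - 1) * (s - x₂) ^ (H / 2 - 1)
      ≤ (2 / H + 1 / (1 - H)) * (x₁ - x₂) ^ (H - 1) := by
  have hd0 : (0:ℝ) < x₁ - x₂ := by linarith
  have hd1 : (0:ℝ) ≤ (x₁ - x₂) ^ (H - 1) := Real.rpow_nonneg hd0.le _
  have hfirst : ∀ e' : ℝ, 0 ≤ e' → e' ≤ x₁ - x₂ →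
      ∫ s in x₁..(x₁ + e'), (s - x₁) ^ (H / 2 - 1) * (s - x₂) ^ (H / 2 - 1)
        ≤ 2 / H * (x₁ - x₂) ^ (H - 1) := by
    intro e' he' he'd
    refine (bound_C hH hH' hx he').trans ?_
    rw [← rpow_helper hH hH' hd0]
    have h2 : e' ^ (H / 2) ≤ (x₁ - x₂) ^ (H / 2) :=
      Real.rpow_le_rpow he' he'd (by linarith)
    gcongr
  rcases le_or_gt e (x₁ - x₂) with hcase | hcase
  · refine (hfirst e he.le hcase).trans ?_
    nlinarith [div_nonneg (by norm_num : (0:ℝ) ≤ 1) (by linarith : (0:ℝ) ≤ 1 - H)]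
  · have hb1 : x₁ ≤ x₁ + (x₁ - x₂) := by linarith
    have hb2 : x₁ + (x₁ - x₂) ≤ x₁ + e := by linarith
    have hIfull := K_integrable hH hH' hx (show x₁ ≤ x₁ + e by linarith)
    have hi1 : IntervalIntegrable
        (fun s => (s - x₁) ^ (H / 2 - 1) * (s - x₂) ^ (H / 2 - 1)) volume x₁ (x₁ + (x₁ - x₂)) := by
      apply hIfull.mono_set
      rw [uIcc_of_le hb1, uIcc_of_le (hb1.trans hb2)]
      exact Icc_subset_Icc le_rfl hb2
    have hi2 : IntervalIntegrable
        (fun s => (s - x₁) ^ (H / 2 - 1) * (s - x₂) ^ (H / 2 - 1)) volume (x₁ + (x₁ - x₂)) (x₁ + e) := by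
      apply hIfull.mono_set
      rw [uIcc_of_le hb2, uIcc_of_le (hb1.trans hb2)]
      exact Icc_subset_Icc hb1 le_rfl
    rw [← intervalIntegral.integral_add_adjacent_intervals hi1 hi2]
    have h1 := hfirst (x₁ - x₂) hd0.le le_rfl
    have h2 := bound_D hH hH' hx.le hd0 hcase.le
    have h3 : (2 / H + 1 / (1 - H)) * (x₁ - x₂) ^ (H - 1)
        = 2 / H * (x₁ - x₂) ^ (H - 1) + (x₁ - x₂) ^ (H - 1) / (1 - H) := by ring
    rw [h3]
    exact add_le_add h1 h2


lemma bound_J (hH : 1 / 2 < H) (hH' : H < 1) {x₁ e : ℝ} (hx₁ : 0 ≤ x₁) (he : 0 < e) :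
    ∫ x₂ in (0:ℝ)..x₁,
        (∫ s in x₁..(x₁ + e), (s - x₁) ^ (H / 2 - 1) * (s - x₂) ^ (H / 2 - 1)) ^ 2
      ≤ ((2 / H + 1 / (1 - H)) ^ 2 / (2 * H - 1) + (2 / H) ^ 2 / (1 - H)) * e ^ (2 * H - 1) := by
  have h0 : H ≠ 0 := by linarith
  have h2H : (0:ℝ) < 2 * H - 1 := by linarith
  have h1H : (0:ℝ) < 1 - H := by linarith
  set c₁ : ℝ := 2 / H + 1 / (1 - H) with hc₁
  set F : ℝ → ℝ := fun x₂ =>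
    (∫ s in x₁..(x₁ + e), (s - x₁) ^ (H / 2 - 1) * (s - x₂) ^ (H / 2 - 1)) ^ 2 with hF
  have heH : (0:ℝ) ≤ e ^ (2 * H - 1) := Real.rpow_nonneg he.le _
  have hC₂0 : (0:ℝ) ≤ c₁ ^ 2 / (2 * H - 1) + (2 / H) ^ 2 / (1 - H) :=
    add_nonneg (div_nonneg (sq_nonneg _) h2H.le) (div_nonneg (sq_nonneg _) h1H.le)
  have claim : ∀ x₂ : ℝ, x₂ < x₁ → F x₂ ≤ c₁ ^ 2 * (x₁ - x₂) ^ (2 * H - 2) := by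
    intro x₂ hx
    have hd0 : (0:ℝ) < x₁ - x₂ := by linarith
    have hI0 : 0 ≤ ∫ s in x₁..(x₁ + e), (s - x₁) ^ (H / 2 - 1) * (s - x₂) ^ (H / 2 - 1) :=
      K_nonneg hH' hx.le le_rfl (by linarith)
    have hIle := bound_E hH hH' hx he
    calc F x₂ ≤ (c₁ * (x₁ - x₂) ^ (H - 1)) ^ 2 := pow_le_pow_left₀ hI0 hIle 2
      _ = c₁ ^ 2 * (x₁ - x₂) ^ (2 * H - 2) := by
          rw [mul_pow, sq_rpow hd0.le, show 2 * (H - 1) = 2 * H - 2 by ring]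
  have hae : ∀ a : ℝ,
      F ≤ᵐ[volume.restrict (Icc a x₁)] fun x₂ => c₁ ^ 2 * (x₁ - x₂) ^ (2 * H - 2) := by
    intro a
    have hne : ∀ᵐ x₂ ∂(volume.restrict (Icc a x₁)), x₂ ≠ x₁ := by
      refine ae_restrict_of_ae ?_
      rw [ae_iff]
      simp only [ne_eq, not_not, setOf_eq_eq_singleton]
      exact measure_singleton x₁
    filter_upwards [hne, ae_restrict_mem measurableSet_Icc] with x₂ h1 h2
    exact claim x₂ (lt_of_le_of_ne h2.2 h1)
  by_cases hInt : IntervalIntegrable F volume 0 x₁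
  · rcases le_or_gt x₁ e with hxe | hxe
    · have hg : IntervalIntegrable (fun x₂ => c₁ ^ 2 * (x₁ - x₂) ^ (2 * H - 2)) volume 0 x₁ :=
        (reflInt (by linarith) x₁ 0 x₁).const_mul _
      have hm := intervalIntegral.integral_mono_ae_restrict hx₁ hInt hg (hae 0)
      rw [intervalIntegral.integral_const_mul, reflEval (by linarith) x₁ 0, sub_zero,
        show 2 * H - 2 + 1 = 2 * H - 1 by ring] at hm
      refine hm.trans ?_
      have h4 : x₁ ^ (2 * H - 1) ≤ e ^ (2 * H - 1) := Real.rpow_le_rpow hx₁ hxe h2H.le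
      have h5 : (0:ℝ) ≤ (2 / H) ^ 2 / (1 - H) * e ^ (2 * H - 1) :=
        mul_nonneg (div_nonneg (sq_nonneg _) h1H.le) heH
      calc c₁ ^ 2 * (x₁ ^ (2 * H - 1) / (2 * H - 1))
          ≤ c₁ ^ 2 * (e ^ (2 * H - 1) / (2 * H - 1)) := by gcongr
        _ = c₁ ^ 2 / (2 * H - 1) * e ^ (2 * H - 1) := by ring
        _ ≤ (c₁ ^ 2 / (2 * H - 1) + (2 / H) ^ 2 / (1 - H)) * e ^ (2 * H - 1) := by
            nlinarith [h5]
    · have hm0 : (0:ℝ) ≤ x₁ - e := by linarith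
      have hme : x₁ - e ≤ x₁ := by linarith
      have hi1 : IntervalIntegrable F volume 0 (x₁ - e) := by
        apply hInt.mono_set
        rw [uIcc_of_le hm0, uIcc_of_le hx₁]
        exact Icc_subset_Icc le_rfl hme
      have hi2 : IntervalIntegrable F volume (x₁ - e) x₁ := by
        apply hInt.mono_set
        rw [uIcc_of_le hme, uIcc_of_le hx₁]
        exact Icc_subset_Icc hm0 le_rfl
      rw [← intervalIntegral.integral_add_adjacent_intervals hi1 hi2]
      -- piece 1 : x₂ ∈ [0, x₁ - e]
      have hhc : ContinuousOn (fun x₂ => (2 / H) ^ 2 * e ^ H * (x₁ - x₂) ^ (H - 2))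
          (uIcc 0 (x₁ - e)) := by
        rw [uIcc_of_le hm0]
        refine ContinuousOn.mul continuousOn_const ?_
        refine (continuousOn_const.sub continuousOn_id).rpow_const (fun x hx => Or.inl ?_)
        have := hx.2
        intro hcon
        simp only [Pi.sub_apply, id_eq] at hcon
        rw [sub_eq_zero] at hcon
        nlinarith
      have hmono1 := intervalIntegral.integral_mono_on hm0 hi1 hhc.intervalIntegrable
        (fun x₂ hx₂ => ?ptw)
      case ptw =>
        have hx2 : x₂ < x₁ := by have := hx₂.2; linarith
        have hd0 : (0:ℝ) < x₁ - x₂ := by linarith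
        have hI0 : 0 ≤ ∫ s in x₁..(x₁ + e), (s - x₁) ^ (H / 2 - 1) * (s - x₂) ^ (H / 2 - 1) :=
          K_nonneg hH' hx2.le le_rfl (by linarith)
        have hIle := bound_C hH hH' hx2 he.le
        calc F x₂ ≤ ((x₁ - x₂) ^ (H / 2 - 1) * (e ^ (H / 2) / (H / 2))) ^ 2 :=
              pow_le_pow_left₀ hI0 hIle 2
          _ = (2 / H) ^ 2 * e ^ H * (x₁ - x₂) ^ (H - 2) := by
              rw [mul_pow, sq_rpow hd0.le, div_pow, sq_rpow he.le,
                show 2 * (H / 2 - 1) = H - 2 by ring, show 2 * (H / 2) = H by ring]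
              field_simp
      have heval : ∫ x₂ in (0:ℝ)..(x₁ - e), (2 / H) ^ 2 * e ^ H * (x₁ - x₂) ^ (H - 2)
          = (2 / H) ^ 2 * e ^ H * ((e ^ (H - 1) - x₁ ^ (H - 1)) / (1 - H)) := by
        rw [intervalIntegral.integral_const_mul]
        have h := intervalIntegral.integral_comp_sub_left (a := (0:ℝ)) (b := x₁ - e)
          (fun x => x ^ (H - 2)) x₁
        rw [show x₁ - (x₁ - e) = e by ring, show x₁ - (0:ℝ) = x₁ by ring] at h
        rw [h, integral_rpow (Or.inr ⟨by intro hc; rw [sub_eq_iff_eq_add] at hc; linarith,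
          notMem_uIcc_of_lt he (by linarith)⟩), show H - 2 + 1 = H - 1 by ring]
        congr 1
        rw [div_eq_div_iff (by linarith) (by linarith)]
        ring
      have hx1H : (0:ℝ) ≤ x₁ ^ (H - 1) := Real.rpow_nonneg hx₁ _
      have he2 : e ^ H * e ^ (H - 1) = e ^ (2 * H - 1) := by
        rw [← Real.rpow_add he, show H + (H - 1) = 2 * H - 1 by ring]
      have hp1 : ∫ x₂ in (0:ℝ)..(x₁ - e), F x₂ ≤ (2 / H) ^ 2 / (1 - H) * e ^ (2 * H - 1) := by
        refine (hmono1.trans (le_of_eq heval)).trans ?_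
        calc (2 / H) ^ 2 * e ^ H * ((e ^ (H - 1) - x₁ ^ (H - 1)) / (1 - H))
            ≤ (2 / H) ^ 2 * e ^ H * (e ^ (H - 1) / (1 - H)) := by
              gcongr
              linarith
          _ = (2 / H) ^ 2 / (1 - H) * e ^ (2 * H - 1) := by rw [← he2]; ring
      -- piece 2 : x₂ ∈ [x₁ - e, x₁]
      have hg2 : IntervalIntegrable (fun x₂ => c₁ ^ 2 * (x₁ - x₂) ^ (2 * H - 2))
          volume (x₁ - e) x₁ := (reflInt (by linarith) x₁ _ _).const_mul _
      have hp2 := intervalIntegral.integral_mono_ae_restrict hme hi2 hg2 (hae (x₁ - e))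
      rw [intervalIntegral.integral_const_mul, reflEval (by linarith) x₁ (x₁ - e),
        show x₁ - (x₁ - e) = e by ring, show 2 * H - 2 + 1 = 2 * H - 1 by ring] at hp2
      calc (∫ x₂ in (0:ℝ)..(x₁ - e), F x₂) + ∫ x₂ in (x₁ - e)..x₁, F x₂
          ≤ (2 / H) ^ 2 / (1 - H) * e ^ (2 * H - 1)
            + c₁ ^ 2 * (e ^ (2 * H - 1) / (2 * H - 1)) := add_le_add hp1 hp2
        _ = (c₁ ^ 2 / (2 * H - 1) + (2 / H) ^ 2 / (1 - H)) * e ^ (2 * H - 1) := by ring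
  · rw [intervalIntegral.integral_undef hInt]
    exact mul_nonneg hC₂0 heH

end KernelAuxGST

/-- key kernel estimate in the proof of Proposition 4. -/
theorem kernel_square_estimate
    (H T : ℝ) (hH : 1 / 2 < H) (hH' : H < 1) (hT : 0 < T) :
    ∃ C : ℝ, 0 < C ∧ ∀ ε : ℝ, 0 < ε → ε ≤ T →
      (∫ x₁ in (0 : ℝ)..(T - ε), ∫ x₂ in (0 : ℝ)..x₁,
        (∫ s in x₁..(x₁ + ε),
          (s - x₁) ^ (H / 2 - 1) * (s - x₂) ^ (H / 2 - 1)) ^ 2)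
      ≤ C * ε ^ (2 * H - 1) := by
  have h2H : (0:ℝ) < 2 * H - 1 := by linarith
  have h1H : (0:ℝ) < 1 - H := by linarith
  set C₂ : ℝ := (2 / H + 1 / (1 - H)) ^ 2 / (2 * H - 1) + (2 / H) ^ 2 / (1 - H) with hC₂
  have hC₂pos : 0 < C₂ := by
    rw [hC₂]
    have h1 : (0:ℝ) < 2 / H := div_pos (by norm_num) (by linarith)
    have h2 : (0:ℝ) < 1 / (1 - H) := div_pos (by norm_num) h1H
    apply add_pos (div_pos (by positivity) h2H) (div_pos (by positivity) h1H)
  refine ⟨T * C₂, mul_pos hT hC₂pos, fun ε hε hεT => ?_⟩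
  have heH : (0:ℝ) ≤ ε ^ (2 * H - 1) := Real.rpow_nonneg hε.le _
  have hassoc : T * C₂ * ε ^ (2 * H - 1) = T * (C₂ * ε ^ (2 * H - 1)) := by ring
  by_cases hInt : IntervalIntegrable (fun x₁ => ∫ x₂ in (0:ℝ)..x₁,
      (∫ s in x₁..(x₁ + ε), (s - x₁) ^ (H / 2 - 1) * (s - x₂) ^ (H / 2 - 1)) ^ 2)
      volume 0 (T - ε)
  · have hTe : (0:ℝ) ≤ T - ε := by linarith
    have hm := intervalIntegral.integral_mono_on hTe hInt
      (intervalIntegrable_const (c := C₂ * ε ^ (2 * H - 1)))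
      (fun x₁ hx₁ => by rw [hC₂]; exact KernelAuxGST.bound_J hH hH' hx₁.1 hε)
    rw [intervalIntegral.integral_const, smul_eq_mul, sub_zero] at hm
    refine hm.trans ?_
    rw [hassoc]
    exact mul_le_mul_of_nonneg_right (by linarith) (mul_nonneg hC₂pos.le heH)
  · rw [intervalIntegral.integral_undef hInt]
    exact mul_nonneg (mul_pos hT hC₂pos).le heH
end
end
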